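/- arXiv:1105.0169 — 3 statements merged into one kernel-verified Lean document; each statement's English description precedes it below -/
import Mathlib

section
/- Any finite set of points in the plane in general position (no 3 collinear) can be colored with 2 colors such that every half-plane containing at least 3 of the points contains two points of different colors. -/
noncomputable section
open Classical

def halfPlane (a b c : ℝ) : Set (ℝ × ℝ) := {p | a * p.1 + b * p.2 ≤ c}

def GenPos (P : Finset (ℝ × ℝ)) : Prop :=
  ∀ p ∈ P, ∀ q ∈ P, ∀ r ∈ P, p ≠ q → p ≠ r → q ≠ r →
    ¬ Collinear ℝ ({p, q, r} : Set (ℝ × ℝ))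

namespace Stmt10Aux

/-- cross product of two vectors in the plane -/
def cross (u v : ℝ × ℝ) : ℝ := u.1 * v.2 - u.2 * v.1

/-- a linear functional on the plane -/
def lin (A B : ℝ) (p : ℝ × ℝ) : ℝ := A * p.1 + B * p.2

open Finset in
/-- hull vertices of P -/
def Vset (P : Finset (ℝ × ℝ)) : Finset (ℝ × ℝ) :=
  P.filter (fun x => x ∉ convexHull ℝ ((P.erase x : Finset (ℝ × ℝ)) : Set (ℝ × ℝ)))

lemma Vset_subset (P : Finset (ℝ × ℝ)) : Vset P ⊆ P := Finset.filter_subset _ _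

lemma mem_Vset {P : Finset (ℝ × ℝ)} {x : ℝ × ℝ} :
    x ∈ Vset P ↔ x ∈ P ∧ x ∉ convexHull ℝ ((P.erase x : Finset (ℝ × ℝ)) : Set (ℝ × ℝ)) :=
  Finset.mem_filter

/-- if cross u z = 0 and u ≠ 0 then z is a multiple of u -/
lemma cross_eq_zero_imp {u z : ℝ × ℝ} (hu : u ≠ 0) (h : cross u z = 0) :
    ∃ t : ℝ, z = t • u := by
  have hu' : u.1 ≠ 0 ∨ u.2 ≠ 0 := by
    by_contra hc
    push_neg at hc
    exact hu (Prod.ext hc.1 hc.2)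
  simp only [cross] at h
  rcases hu' with h1 | h1
  · refine ⟨z.1 / u.1, Prod.ext ?_ ?_⟩ <;> simp only [Prod.smul_fst, Prod.smul_snd, smul_eq_mul]
    · field_simp
    · field_simp
      nlinarith [h]
  · refine ⟨z.2 / u.2, Prod.ext ?_ ?_⟩ <;> simp only [Prod.smul_fst, Prod.smul_snd, smul_eq_mul]
    · field_simp
      nlinarith [h]
    · field_simp

/-- from general position: cross of differences of three distinct points is nonzero -/
lemma gp_cross {P : Finset (ℝ × ℝ)} (hP : GenPos P) {p q r : ℝ × ℝ}
    (hp : p ∈ P) (hq : q ∈ P) (hr : r ∈ P) (hpq : p ≠ q) (hpr : p ≠ r) (hqr : q ≠ r) :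
    cross (q - p) (r - p) ≠ 0 := by
  intro h
  apply hP p hp q hq r hr hpq hpr hqr
  have hqp : q - p ≠ 0 := fun h0 => hpq (by
    have := sub_eq_zero.mp h0; exact this.symm)
  obtain ⟨t, ht⟩ := cross_eq_zero_imp hqp h
  rw [collinear_iff_of_mem (show p ∈ ({p, q, r} : Set (ℝ × ℝ)) by simp)]
  refine ⟨q - p, fun pt hpt => ?_⟩
  rcases hpt with h1 | h1 | h1
  · exact ⟨0, by simp [h1]⟩
  · refine ⟨1, by simp [h1]⟩
  · have hpt : pt = r := h1
    refine ⟨t, ?_⟩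
    rw [hpt, vadd_eq_add, ← ht]
    abel

/-- convex combination of three points lies in the convex hull of the corresponding set -/
lemma combo3_mem {p q r x : ℝ × ℝ} {a b c : ℝ} (ha : 0 ≤ a) (hb : 0 ≤ b) (hc : 0 ≤ c)
    (hsum : a + b + c = 1) (hx : x = a • p + b • q + c • r) :
    x ∈ convexHull ℝ ({p, q, r} : Set (ℝ × ℝ)) := by
  have h := (convex_convexHull ℝ ({p, q, r} : Set (ℝ × ℝ))).sum_mem
    (t := (Finset.univ : Finset (Fin 3))) (w := ![a, b, c]) (z := ![p, q, r])
    (by intro i _; fin_cases i <;> simpa) (by simp [Fin.sum_univ_three, hsum])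
    (by intro i _; fin_cases i <;> simp [subset_convexHull ℝ ({p, q, r} : Set (ℝ × ℝ))] <;>
        apply subset_convexHull ℝ ({p, q, r} : Set (ℝ × ℝ)) <;> simp)
  simpa [Fin.sum_univ_three, ← hx] using h

/-- a strict minimizer of a linear functional is a hull vertex -/
lemma min_mem_Vset {P : Finset (ℝ × ℝ)} {A B : ℝ} {s : ℝ × ℝ} (hs : s ∈ P)
    (hmin : ∀ q ∈ P, q ≠ s → lin A B s < lin A B q) : s ∈ Vset P := by
  rw [mem_Vset]
  refine ⟨hs, fun hmem => ?_⟩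
  have hlin : IsLinearMap ℝ (lin A B) := ⟨fun x y => by simp [lin]; ring,
    fun c x => by simp [lin, smul_eq_mul]; ring⟩
  have hsub : convexHull ℝ ((P.erase s : Finset (ℝ × ℝ)) : Set (ℝ × ℝ)) ⊆
      {x | lin A B s < lin A B x} := by
    apply convexHull_min
    · intro q hq
      simp only [Finset.coe_erase, Set.mem_diff, Set.mem_singleton_iff] at hq
      exact hmin q hq.1 hq.2
    · exact convex_halfSpace_gt hlin _
  have hcon := hsub hmem
  simp only [Set.mem_setOf_eq] at hcon
  exact lt_irrefl _ hcon

/-- separation of a hull vertex from the others -/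
lemma vertex_sep {P : Finset (ℝ × ℝ)} {v : ℝ × ℝ} (hv : v ∈ Vset P) :
    ∃ c1 c2 : ℝ, ∀ p ∈ P, p ≠ v → 0 < lin c1 c2 p - lin c1 c2 v := by
  rw [mem_Vset] at hv
  obtain ⟨f, u, hfu, hforall⟩ := geometric_hahn_banach_point_closed
    (convex_convexHull ℝ _)
    (Set.Finite.isClosed_convexHull (𝕜 := ℝ) (Finset.finite_toSet (P.erase v))) hv.2
  refine ⟨f (1, 0), f (0, 1), fun p hp hpv => ?_⟩
  have hrepr : ∀ x : ℝ × ℝ, f x = lin (f (1, 0)) (f (0, 1)) x := by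
    intro x
    have hx : x = x.1 • ((1 : ℝ), (0 : ℝ)) + x.2 • ((0 : ℝ), (1 : ℝ)) := by
      apply Prod.ext <;> simp
    rw [lin]
    conv_lhs => rw [hx]
    rw [map_add, map_smul, map_smul, smul_eq_mul, smul_eq_mul]
    ring
  have hpmem : p ∈ convexHull ℝ ((P.erase v : Finset (ℝ × ℝ)) : Set (ℝ × ℝ)) :=
    subset_convexHull ℝ _ (by simp [Finset.mem_coe, Finset.mem_erase, hpv, hp])
  have := hforall p hpmem
  rw [← hrepr, ← hrepr]
  linarith

/-- existence of the two canonical neighbors of a hull vertex -/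
lemma nbrs_exists {P : Finset (ℝ × ℝ)} (hP : GenPos P) (h3 : 3 ≤ P.card)
    {v : ℝ × ℝ} (hv : v ∈ Vset P) :
    ∃ u w : ℝ × ℝ, u ∈ P ∧ w ∈ P ∧ u ≠ v ∧ w ≠ v ∧ u ≠ w ∧
      (∀ x ∈ P, x ≠ v → x ≠ u → 0 < cross (u - v) (x - v)) ∧
      (∀ x ∈ P, x ≠ v → x ≠ w → cross (w - v) (x - v) < 0) := by
  obtain ⟨c1, c2, hsep⟩ := vertex_sep hv
  have hvP : v ∈ P := (mem_Vset.mp hv).1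
  set E := P.erase v with hE
  have hEne : E.Nonempty := by
    rw [hE, ← Finset.card_pos, Finset.card_erase_of_mem hvP]
    omega
  set ψ : ℝ × ℝ → ℝ := fun p => lin c1 c2 p - lin c1 c2 v with hψ
  set φ : ℝ × ℝ → ℝ := fun p => lin (-c2) c1 p - lin (-c2) c1 v with hφ
  have hψpos : ∀ p ∈ E, 0 < ψ p := by
    intro p hp
    rw [hE, Finset.mem_erase] at hp
    exact hsep p hp.2 hp.1
  set K := c1 ^ 2 + c2 ^ 2 with hK
  have hKpos : 0 < K := by
    obtain ⟨p, hp⟩ := hEne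
    have h1 := hψpos p hp
    rcases lt_or_ge 0 K with h | h
    · exact h
    · exfalso
      have hc1 : c1 = 0 := by nlinarith
      have hc2 : c2 = 0 := by nlinarith
      rw [hψ] at h1
      simp only [lin, hc1, hc2] at h1
      norm_num at h1
  have key : ∀ p q : ℝ × ℝ, ψ p * φ q - ψ q * φ p = K * cross (p - v) (q - v) := by
    intro p q
    simp only [hψ, hφ, hK, lin, cross, Prod.fst_sub, Prod.snd_sub]
    ring
  set θ : ℝ × ℝ → ℝ := fun p => φ p / ψ p with hθ
  have hθinj : ∀ p ∈ E, ∀ q ∈ E, θ p = θ q → p = q := by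
    intro p hp q hq hpq
    by_contra hne
    have h1 := hψpos p hp
    have h2 := hψpos q hq
    have h3 : φ p * ψ q = φ q * ψ p := by
      rw [hθ] at hpq
      field_simp at hpq
      linarith [hpq]
    have h4 : ψ p * φ q - ψ q * φ p = 0 := by linarith
    rw [key] at h4
    have h5 : cross (p - v) (q - v) = 0 := by
      rcases mul_eq_zero.mp h4 with h | h
      · linarith
      · exact h
    rw [hE, Finset.mem_erase] at hp hq
    exact gp_cross hP hvP hp.2 hq.2 (Ne.symm hp.1) (Ne.symm hq.1) hne h5
  obtain ⟨u, huE, humin⟩ := Finset.exists_min_image E θ hEne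
  obtain ⟨w, hwE, hwmax⟩ := Finset.exists_max_image E θ hEne
  have huP : u ∈ P := (Finset.mem_erase.mp huE).2
  have hwP : w ∈ P := (Finset.mem_erase.mp hwE).2
  have huv : u ≠ v := (Finset.mem_erase.mp huE).1
  have hwv : w ≠ v := (Finset.mem_erase.mp hwE).1
  have hcross_of_lt : ∀ p ∈ E, ∀ q ∈ E, θ p < θ q → 0 < cross (p - v) (q - v) := by
    intro p hp q hq hlt
    have h1 := hψpos p hp
    have h2 := hψpos q hq
    have h3 : φ p * ψ q < φ q * ψ p := by
      rw [hθ] at hlt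
      exact (div_lt_div_iff₀ h1 h2).mp hlt
    have h4 : 0 < ψ p * φ q - ψ q * φ p := by linarith
    rw [key] at h4
    by_contra hc
    push_neg at hc
    nlinarith [mul_nonneg (le_of_lt hKpos) (neg_nonneg.mpr hc)]
  have hstrict_min : ∀ x ∈ E, x ≠ u → θ u < θ x := by
    intro x hx hxu
    rcases lt_or_eq_of_le (humin x hx) with h | h
    · exact h
    · exact absurd (hθinj u huE x hx h) (Ne.symm hxu)
  have hstrict_max : ∀ x ∈ E, x ≠ w → θ x < θ w := by
    intro x hx hxw
    rcases lt_or_eq_of_le (hwmax x hx) with h | h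
    · exact h
    · exact absurd (hθinj x hx w hwE h) hxw
  have huw : u ≠ w := by
    have hcard : 1 < E.card := by
      rw [hE, Finset.card_erase_of_mem hvP]
      omega
    obtain ⟨x, hxE, hxu⟩ := Finset.exists_mem_ne hcard u
    have h1 := hstrict_min x hxE hxu
    intro huweq
    rcases eq_or_ne x w with h | h
    · subst h
      rw [huweq] at h1
      exact lt_irrefl _ h1
    · have h2 := hstrict_max x hxE h
      rw [huweq] at h1
      exact lt_irrefl _ (h1.trans h2)
  refine ⟨u, w, huP, hwP, huv, hwv, huw, ?_, ?_⟩
  · intro x hxP hxv hxu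
    have hxE : x ∈ E := Finset.mem_erase.mpr ⟨hxv, hxP⟩
    exact hcross_of_lt u huE x hxE (hstrict_min x hxE hxu)
  · intro x hxP hxv hxw
    have hxE : x ∈ E := Finset.mem_erase.mpr ⟨hxv, hxP⟩
    have h1 := hcross_of_lt x hxE w hwE (hstrict_max x hxE hxw)
    have h2 : cross (w - v) (x - v) = -cross (x - v) (w - v) := by
      simp only [cross]; ring
    rw [h2]
    linarith

def nbrU (P : Finset (ℝ × ℝ)) (v : ℝ × ℝ) : ℝ × ℝ :=
  if h : GenPos P ∧ 3 ≤ P.card ∧ v ∈ Vset P then (nbrs_exists h.1 h.2.1 h.2.2).choose else 0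

def nbrW (P : Finset (ℝ × ℝ)) (v : ℝ × ℝ) : ℝ × ℝ :=
  if h : GenPos P ∧ 3 ≤ P.card ∧ v ∈ Vset P then
    (nbrs_exists h.1 h.2.1 h.2.2).choose_spec.choose else 0

lemma nbr_spec {P : Finset (ℝ × ℝ)} (hP : GenPos P) (h3 : 3 ≤ P.card)
    {v : ℝ × ℝ} (hv : v ∈ Vset P) :
    nbrU P v ∈ P ∧ nbrW P v ∈ P ∧ nbrU P v ≠ v ∧ nbrW P v ≠ v ∧ nbrU P v ≠ nbrW P v ∧
      (∀ x ∈ P, x ≠ v → x ≠ nbrU P v → 0 < cross (nbrU P v - v) (x - v)) ∧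
      (∀ x ∈ P, x ≠ v → x ≠ nbrW P v → cross (nbrW P v - v) (x - v) < 0) := by
  have h : GenPos P ∧ 3 ≤ P.card ∧ v ∈ Vset P := ⟨hP, h3, hv⟩
  have h1 := (nbrs_exists h.1 h.2.1 h.2.2).choose_spec.choose_spec
  rw [nbrU, nbrW, dif_pos h, dif_pos h]
  exact h1


/-- if all of P lies weakly on one side of an affine functional vanishing at m and e, and
strictly except at m and e, then m is a vertex -/
lemma vertex_of_side {P : Finset (ℝ × ℝ)} {m e : ℝ × ℝ} (hm : m ∈ P) (hme : m ≠ e)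
    (G : ℝ × ℝ → ℝ) (a1 a2 a3 : ℝ) (hGdef : ∀ x, G x = a1 * x.1 + a2 * x.2 + a3)
    (hGm : G m = 0) (hGe : G e = 0) (hGpos : ∀ q ∈ P, q ≠ m → q ≠ e → 0 < G q) :
    m ∈ Vset P := by
  rw [mem_Vset]
  refine ⟨hm, fun hmem => ?_⟩
  rw [Finset.mem_convexHull] at hmem
  obtain ⟨wt, hw0, hwsum, hwc⟩ := hmem
  rw [Finset.centerMass_eq_of_sum_1 _ id hwsum] at hwc
  have h1 : (∑ q ∈ P.erase m, wt q • (id q : ℝ × ℝ)).1 = ∑ q ∈ P.erase m, wt q * q.1 := by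
    rw [Prod.fst_sum]
    exact Finset.sum_congr rfl (fun q hq => by simp [smul_eq_mul])
  have h2 : (∑ q ∈ P.erase m, wt q • (id q : ℝ × ℝ)).2 = ∑ q ∈ P.erase m, wt q * q.2 := by
    rw [Prod.snd_sum]
    exact Finset.sum_congr rfl (fun q hq => by simp [smul_eq_mul])
  have hm1 : m.1 = ∑ q ∈ P.erase m, wt q * q.1 := by rw [← h1, hwc]
  have hm2 : m.2 = ∑ q ∈ P.erase m, wt q * q.2 := by rw [← h2, hwc]
  have hsumG : ∑ q ∈ P.erase m, wt q * G q = 0 := by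
    calc ∑ q ∈ P.erase m, wt q * G q
        = ∑ q ∈ P.erase m, (a1 * (wt q * q.1) + a2 * (wt q * q.2) + a3 * wt q) :=
          Finset.sum_congr rfl (fun q hq => by rw [hGdef]; ring)
      _ = a1 * (∑ q ∈ P.erase m, wt q * q.1) + a2 * (∑ q ∈ P.erase m, wt q * q.2)
            + a3 * (∑ q ∈ P.erase m, wt q) := by
          rw [Finset.sum_add_distrib, Finset.sum_add_distrib, ← Finset.mul_sum, ← Finset.mul_sum,
            ← Finset.mul_sum]
      _ = a1 * m.1 + a2 * m.2 + a3 * 1 := by rw [← hm1, ← hm2, hwsum]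
      _ = 0 := by rw [← hGm, hGdef]; ring
  have hnn : ∀ q ∈ P.erase m, 0 ≤ wt q * G q := by
    intro q hq
    have hq' := Finset.mem_erase.mp hq
    rcases eq_or_ne q e with h | h
    · rw [h, hGe, mul_zero]
    · exact mul_nonneg (hw0 q hq) (le_of_lt (hGpos q hq'.2 hq'.1 h))
  have hterms := (Finset.sum_eq_zero_iff_of_nonneg hnn).mp hsumG
  have hwzero : ∀ q ∈ P.erase m, q ≠ e → wt q = 0 := by
    intro q hq hqe
    have hq' := Finset.mem_erase.mp hq
    have := hterms q hq
    rcases mul_eq_zero.mp this with h | h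
    · exact h
    · exact absurd h (ne_of_gt (hGpos q hq'.2 hq'.1 hqe))
  have heP : e ∈ P.erase m ∨ e ∉ P.erase m := Classical.em _
  have hsum_single : ∑ q ∈ P.erase m, wt q • (id q : ℝ × ℝ) = wt e • e ∨
      (∀ q ∈ P.erase m, wt q = 0) := by
    rcases heP with h | h
    · left
      rw [Finset.sum_eq_single_of_mem e h]
      · simp
      · intro b hb hbe
        rw [hwzero b hb hbe, zero_smul]
    · right
      intro q hq
      exact hwzero q hq (fun hqe => h (hqe ▸ hq))
  rcases hsum_single with h | h
  · rw [h] at hwc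
    have hwe : wt e = 1 := by
      by_cases he : e ∈ P.erase m
      · have : ∑ q ∈ P.erase m, wt q = wt e := by
          apply Finset.sum_eq_single_of_mem e he
          intro b hb hbe
          exact hwzero b hb hbe
        rw [this] at hwsum
        exact hwsum
      · exfalso
        rw [Finset.sum_eq_zero] at hwsum
        · exact one_ne_zero hwsum.symm
        · intro q hq
          exact hwzero q hq (fun hqe => he (hqe ▸ hq))
    rw [hwe, one_smul] at hwc
    exact hme hwc.symm
  · rw [Finset.sum_eq_zero (fun q hq => by rw [h q hq, zero_smul])] at hwc
    rw [Finset.sum_eq_zero h] at hwsum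
    exact one_ne_zero hwsum.symm

/-- the canonical neighbors are hull vertices -/
lemma nbrU_mem_Vset {P : Finset (ℝ × ℝ)} (hP : GenPos P) (h3 : 3 ≤ P.card)
    {v : ℝ × ℝ} (hv : v ∈ Vset P) : nbrU P v ∈ Vset P := by
  obtain ⟨huP, hwP, huv, hwv, huw, hK1, hK2⟩ := nbr_spec hP h3 hv
  set u := nbrU P v
  refine vertex_of_side (e := v) huP huv
    (fun x => cross (u - v) (x - v))
    (-(u - v).2) ((u - v).1) ((u - v).2 * v.1 - (u - v).1 * v.2)
    (fun x => by simp only [cross, Prod.fst_sub, Prod.snd_sub]; ring)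
    (by simp only [cross]; ring) (by simp only [cross, sub_self, Prod.fst_zero, Prod.snd_zero]; ring) ?_
  intro q hq hqu hqv
  exact hK1 q hq hqv hqu

lemma nbrW_mem_Vset {P : Finset (ℝ × ℝ)} (hP : GenPos P) (h3 : 3 ≤ P.card)
    {v : ℝ × ℝ} (hv : v ∈ Vset P) : nbrW P v ∈ Vset P := by
  obtain ⟨huP, hwP, huv, hwv, huw, hK1, hK2⟩ := nbr_spec hP h3 hv
  set w := nbrW P v
  refine vertex_of_side (e := v) hwP hwv
    (fun x => -cross (w - v) (x - v))
    ((w - v).2) (-(w - v).1) ((w - v).1 * v.2 - (w - v).2 * v.1)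
    (fun x => by simp only [cross, Prod.fst_sub, Prod.snd_sub]; ring)
    (by simp only [cross]; ring) (by simp only [cross, sub_self, Prod.fst_zero, Prod.snd_zero]; ring) ?_
  intro q hq hqw hqv
  have h := hK2 q hq hqv hqw
  show 0 < -cross (nbrW P v - v) (q - v)
  linarith

/-- a vertex is good if its ear is empty -/
def Good (P : Finset (ℝ × ℝ)) (v : ℝ × ℝ) : Prop :=
  ∀ x ∈ P, x ≠ v → cross (nbrW P v - nbrU P v) (x - nbrU P v) ≤ 0

/-- adjacency of two vertices: all other vertices strictly on one side of their line -/
def AdjV (P : Finset (ℝ × ℝ)) (x y : ℝ × ℝ) : Prop :=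
  (∀ a ∈ Vset P, a ≠ x → a ≠ y → 0 < cross (y - x) (a - x)) ∨
  (∀ a ∈ Vset P, a ≠ x → a ≠ y → cross (y - x) (a - x) < 0)

lemma AdjV_symm {P : Finset (ℝ × ℝ)} {x y : ℝ × ℝ} (h : AdjV P x y) : AdjV P y x := by
  have key : ∀ a : ℝ × ℝ, cross (x - y) (a - y) = -cross (y - x) (a - x) := by
    intro a; simp only [cross, Prod.fst_sub, Prod.snd_sub]; ring
  rcases h with h | h
  · right; intro a ha hax hay
    rw [key a]
    have := h a ha hay hax
    linarith
  · left; intro a ha hax hay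
    rw [key a]
    have := h a ha hay hax
    linarith

/-- the two lowest vertices are adjacent -/
lemma adj_two_lowest {P : Finset (ℝ × ℝ)} (hP : GenPos P) {A B : ℝ}
    (hinj : ∀ p ∈ P, ∀ q ∈ P, p ≠ q → lin A B p ≠ lin A B q)
    {s1 v2 : ℝ × ℝ} (hs1 : s1 ∈ P) (hs1V : s1 ∈ Vset P) (hv2 : v2 ∈ Vset P) (hne : v2 ≠ s1)
    (hmin1 : ∀ q ∈ P, q ≠ s1 → lin A B s1 < lin A B q)
    (hmin2 : ∀ q ∈ Vset P, q ≠ s1 → q ≠ v2 → lin A B v2 < lin A B q) :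
    AdjV P s1 v2 := by
  by_contra hc
  rw [AdjV] at hc
  push_neg at hc
  obtain ⟨h1, h2⟩ := hc
  obtain ⟨a, haV, has1, hav2, ha⟩ := h1
  obtain ⟨b, hbV, hbs1, hbv2, hb⟩ := h2
  have haP : a ∈ P := Vset_subset P haV
  have hbP : b ∈ P := Vset_subset P hbV
  have hv2P : v2 ∈ P := Vset_subset P hv2
  have ha' : cross (v2 - s1) (a - s1) < 0 :=
    lt_of_le_of_ne ha (gp_cross hP hs1 hv2P haP (Ne.symm hne) (Ne.symm has1) (Ne.symm hav2))
  have hb' : 0 < cross (v2 - s1) (b - s1) :=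
    lt_of_le_of_ne hb (Ne.symm (gp_cross hP hs1 hv2P hbP (Ne.symm hne) (Ne.symm hbs1)
      (Ne.symm hbv2)))
  set ga := cross (v2 - s1) (a - s1) with hga
  set gb := cross (v2 - s1) (b - s1) with hgb
  set τ := ga / (ga - gb) with hτ
  have hgagb : ga - gb < 0 := by linarith
  have hτ0 : 0 < τ := div_pos_of_neg_of_neg ha' hgagb
  have hτ1 : τ < 1 := by
    rw [hτ, div_lt_one_of_neg hgagb]
    linarith
  set m := (1 - τ) • a + τ • b with hm
  have hgm : cross (v2 - s1) (m - s1) = 0 := by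
    have hexp : cross (v2 - s1) (m - s1) = (1 - τ) * ga + τ * gb := by
      simp only [hm, hga, hgb, cross, Prod.fst_sub, Prod.snd_sub, Prod.fst_add, Prod.snd_add,
        Prod.smul_fst, Prod.smul_snd, smul_eq_mul]
      ring
    rw [hexp, hτ]
    have h0 : ga - gb ≠ 0 := ne_of_lt hgagb
    field_simp
    ring
  obtain ⟨t, ht⟩ := cross_eq_zero_imp (sub_ne_zero.mpr (Ne.symm (Ne.symm hne))) hgm
  have hlinm : lin A B m = (1 - τ) * lin A B a + τ * lin A B b := by
    simp only [hm, lin, Prod.fst_add, Prod.snd_add, Prod.smul_fst, Prod.smul_snd, smul_eq_mul]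
    ring
  have hlina : lin A B v2 < lin A B a := hmin2 a haV has1 hav2
  have hlinb : lin A B v2 < lin A B b := hmin2 b hbV hbs1 hbv2
  have hlinmv2 : lin A B v2 < lin A B m := by
    rw [hlinm]
    nlinarith [mul_pos (by linarith : (0:ℝ) < 1 - τ) (by linarith : 0 < lin A B a - lin A B v2),
      mul_pos hτ0 (by linarith : 0 < lin A B b - lin A B v2)]
  have hc1 : m.1 - s1.1 = t * (v2.1 - s1.1) := by
    have := congrArg Prod.fst ht
    simpa [Prod.fst_sub, Prod.smul_fst, smul_eq_mul] using this
  have hc2 : m.2 - s1.2 = t * (v2.2 - s1.2) := by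
    have := congrArg Prod.snd ht
    simpa [Prod.snd_sub, Prod.smul_snd, smul_eq_mul] using this
  have hd1 : m.1 = (1 - τ) * a.1 + τ * b.1 := by
    simp [hm, Prod.fst_add, Prod.smul_fst, smul_eq_mul]
  have hd2 : m.2 = (1 - τ) * a.2 + τ * b.2 := by
    simp [hm, Prod.snd_add, Prod.smul_snd, smul_eq_mul]
  have hlint : lin A B m - lin A B s1 = t * (lin A B v2 - lin A B s1) := by
    simp only [lin]
    linear_combination A * hc1 + B * hc2
  have hls1v2 : lin A B s1 < lin A B v2 := hmin1 v2 hv2P hne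
  rcases lt_trichotomy t 0 with htc | htc
  · -- s1 is a convex combination of a, b, v2 : contradiction with s1 vertex
    have hs1mem : s1 ∈ convexHull ℝ ({a, b, v2} : Set (ℝ × ℝ)) := by
      have h1t : (0:ℝ) < 1 - t := by linarith
      have h1t' : (1:ℝ) - t ≠ 0 := ne_of_gt h1t
      apply combo3_mem (a := (1 / (1 - t)) * (1 - τ)) (b := (1 / (1 - t)) * τ)
        (c := -t / (1 - t))
      · exact mul_nonneg (div_nonneg zero_le_one (by linarith)) (by linarith)
      · exact mul_nonneg (div_nonneg zero_le_one (by linarith)) (by linarith)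
      · exact div_nonneg (by linarith) (by linarith)
      · field_simp
        ring
      · apply Prod.ext
        · simp only [Prod.fst_add, Prod.smul_fst, smul_eq_mul]
          field_simp
          first
            | linear_combination hd1 - hc1
            | linear_combination hc1 - hd1
            | linear_combination (1 - t) * hd1 - (1 - t) * hc1
        · simp only [Prod.snd_add, Prod.smul_snd, smul_eq_mul]
          field_simp
          first
            | linear_combination hd2 - hc2
            | linear_combination hc2 - hd2
            | linear_combination (1 - t) * hd2 - (1 - t) * hc2
    have hsub : convexHull ℝ ({a, b, v2} : Set (ℝ × ℝ)) ⊆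
        convexHull ℝ ((P.erase s1 : Finset (ℝ × ℝ)) : Set (ℝ × ℝ)) := by
      apply convexHull_mono
      intro q hq
      simp only [Set.mem_insert_iff, Set.mem_singleton_iff] at hq
      rcases hq with h | h | h <;> subst h <;> rw [Finset.mem_coe, Finset.mem_erase]
      · exact ⟨has1, haP⟩
      · exact ⟨hbs1, hbP⟩
      · exact ⟨hne, hv2P⟩
    exact (mem_Vset.mp hs1V).2 (hsub hs1mem)
  · rcases htc with htc | htc
    · -- t = 0 : m = s1, but lin m > lin v2 > lin s1
      rw [htc, zero_mul] at hlint
      linarith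
    · rcases le_or_gt t 1 with htc1 | htc1
      · -- 0 < t ≤ 1 : lin m ≤ lin v2, contradiction
        have : t * (lin A B v2 - lin A B s1) ≤ lin A B v2 - lin A B s1 := by
          nlinarith
        linarith
      · -- t > 1 : v2 is a convex combination of s1, a, b
        have ht0 : t ≠ 0 := by intro h; rw [h] at htc1; linarith
        have hv2mem : v2 ∈ convexHull ℝ ({s1, a, b} : Set (ℝ × ℝ)) := by
          apply combo3_mem (a := 1 - 1 / t) (b := (1 / t) * (1 - τ)) (c := (1 / t) * τ)
          · have : 1 / t < 1 := by
              rw [div_lt_one (by linarith)]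
              linarith
            linarith
          · exact mul_nonneg (div_nonneg zero_le_one (by linarith)) (by linarith)
          · exact mul_nonneg (div_nonneg zero_le_one (by linarith)) (by linarith)
          · field_simp; ring
          · apply Prod.ext
            · simp only [Prod.fst_add, Prod.smul_fst, smul_eq_mul]
              field_simp
              first
                | linear_combination hd1 - hc1
                | linear_combination hc1 - hd1
                | linear_combination t * hc1 - t * hd1
                | linear_combination t * hd1 - t * hc1
            · simp only [Prod.snd_add, Prod.smul_snd, smul_eq_mul]
              field_simp
              first
                | linear_combination hd2 - hc2
                | linear_combination hc2 - hd2
                | linear_combination t * hc2 - t * hd2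
                | linear_combination t * hd2 - t * hc2
        have hsub : convexHull ℝ ({s1, a, b} : Set (ℝ × ℝ)) ⊆
            convexHull ℝ ((P.erase v2 : Finset (ℝ × ℝ)) : Set (ℝ × ℝ)) := by
          apply convexHull_mono
          intro q hq
          simp only [Set.mem_insert_iff, Set.mem_singleton_iff] at hq
          rcases hq with h | h | h <;> subst h <;> rw [Finset.mem_coe, Finset.mem_erase]
          · exact ⟨Ne.symm hne, hs1⟩
          · exact ⟨hav2, haP⟩
          · exact ⟨hbv2, hbP⟩
        exact (mem_Vset.mp hv2).2 (hsub hv2mem)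

/-- characterization: adjacency partners are the canonical neighbors -/
lemma adj_char {P : Finset (ℝ × ℝ)} (hP : GenPos P) (h3 : 3 ≤ P.card)
    {v b : ℝ × ℝ} (hv : v ∈ Vset P) (hbP : b ∈ P) (hb : b ≠ v) (hadj : AdjV P v b) :
    b = nbrU P v ∨ b = nbrW P v := by
  by_contra hc
  push_neg at hc
  obtain ⟨hbu, hbw⟩ := hc
  obtain ⟨huP, hwP, huv, hwv, huw, hK1, hK2⟩ := nbr_spec hP h3 hv
  have huV := nbrU_mem_Vset hP h3 hv
  have hwV := nbrW_mem_Vset hP h3 hv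
  have hu_neg : cross (b - v) (nbrU P v - v) < 0 := by
    have h1 := hK1 b hbP hb hbu
    have h2 : cross (b - v) (nbrU P v - v) = -cross (nbrU P v - v) (b - v) := by
      simp only [cross]; ring
    rw [h2]; linarith
  have hw_pos : 0 < cross (b - v) (nbrW P v - v) := by
    have h1 := hK2 b hbP hb hbw
    have h2 : cross (b - v) (nbrW P v - v) = -cross (nbrW P v - v) (b - v) := by
      simp only [cross]; ring
    rw [h2]; linarith
  rcases hadj with h | h
  · have := h (nbrU P v) huV huv (Ne.symm hbu)
    linarith
  · have := h (nbrW P v) hwV hwv (Ne.symm hbw)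
    linarith

/-- barycentric positivity: a point of P strictly inside the ear triangle -/
lemma tri {P : Finset (ℝ × ℝ)} (hP : GenPos P) (h3 : 3 ≤ P.card)
    {v x : ℝ × ℝ} (hv : v ∈ Vset P) (hx : x ∈ P) (hxv : x ≠ v)
    (hear : 0 < cross (nbrW P v - nbrU P v) (x - nbrU P v)) :
    ∃ lu lv lw : ℝ, 0 < lu ∧ 0 < lv ∧ 0 < lw ∧ lu + lv + lw = 1 ∧
      x = lu • (nbrU P v) + lv • v + lw • (nbrW P v) := by
  obtain ⟨huP, hwP, huv, hwv, huw, hK1, hK2⟩ := nbr_spec hP h3 hv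
  set u := nbrU P v with hu
  set w := nbrW P v with hw
  have hxu : x ≠ u := by
    intro h
    rw [h] at hear
    have h0 : cross (w - u) (u - u) = 0 := by
      simp only [cross, sub_self, Prod.fst_zero, Prod.snd_zero]; ring
    rw [h0] at hear
    exact lt_irrefl _ hear
  have hxw : x ≠ w := by
    intro h
    rw [h] at hear
    have h0 : cross (w - u) (w - u) = 0 := by
      simp only [cross]; ring
    rw [h0] at hear
    exact lt_irrefl _ hear
  have hD : 0 < cross (u - v) (w - v) := hK1 w hwP hwv (Ne.symm huw)
  set D := cross (u - v) (w - v) with hDdef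
  have hnu : 0 < cross (x - v) (w - v) := by
    have h1 := hK2 x hx hxv hxw
    have h2 : cross (x - v) (w - v) = -cross (w - v) (x - v) := by
      simp only [cross]; ring
    rw [h2]; linarith
  have hnw : 0 < cross (u - v) (x - v) := hK1 x hx hxv hxu
  have hsum : cross (x - v) (w - v) + cross (w - u) (x - u) + cross (u - v) (x - v) = D := by
    simp only [hDdef, cross, Prod.fst_sub, Prod.snd_sub]
    ring
  refine ⟨cross (x - v) (w - v) / D, cross (w - u) (x - u) / D, cross (u - v) (x - v) / D,
    div_pos hnu hD, div_pos hear hD, div_pos hnw hD, ?_, ?_⟩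
  · field_simp
    linarith
  · apply Prod.ext <;>
      simp only [Prod.fst_add, Prod.snd_add, Prod.smul_fst, Prod.smul_snd, smul_eq_mul] <;>
      rw [div_mul_eq_mul_div, div_mul_eq_mul_div, div_mul_eq_mul_div, ← add_div,
        ← add_div, eq_comm, div_eq_iff (ne_of_gt hD)] <;>
      simp only [hDdef, cross, Prod.fst_sub, Prod.snd_sub] <;> ring

/-- [FAR]: a point of P on the far side of the chord has large functional value -/
lemma far {P : Finset (ℝ × ℝ)} (hP : GenPos P) (h3 : 3 ≤ P.card)
    {v x : ℝ × ℝ} (hv : v ∈ Vset P) (hx : x ∈ P) (hxv : x ≠ v)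
    (hxu : x ≠ nbrU P v) (hxw : x ≠ nbrW P v)
    (hear : cross (nbrW P v - nbrU P v) (x - nbrU P v) ≤ 0)
    {A B c' : ℝ} (hu : c' < lin A B (nbrU P v)) (hw : c' < lin A B (nbrW P v))
    (hvc : lin A B v ≤ c') : c' < lin A B x := by
  obtain ⟨huP, hwP, huv, hwv, huw, hK1, hK2⟩ := nbr_spec hP h3 hv
  set u := nbrU P v with hudef
  set w := nbrW P v with hwdef
  have hD : 0 < cross (u - v) (w - v) := hK1 w hwP hwv (Ne.symm huw)
  set D := cross (u - v) (w - v) with hDdef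
  have hnu : 0 < cross (x - v) (w - v) := by
    have h1 := hK2 x hx hxv hxw
    have h2 : cross (x - v) (w - v) = -cross (w - v) (x - v) := by
      simp only [cross]; ring
    rw [h2]; linarith
  have hnw : 0 < cross (u - v) (x - v) := hK1 x hx hxv hxu
  have hsum : cross (x - v) (w - v) + cross (w - u) (x - u) + cross (u - v) (x - v) = D := by
    simp only [hDdef, cross, Prod.fst_sub, Prod.snd_sub]
    ring
  have hx1 : cross (x - v) (w - v) * u.1 + cross (w - u) (x - u) * v.1
      + cross (u - v) (x - v) * w.1 = D * x.1 := by
    simp only [hDdef, cross, Prod.fst_sub, Prod.snd_sub]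
    ring
  have hx2 : cross (x - v) (w - v) * u.2 + cross (w - u) (x - u) * v.2
      + cross (u - v) (x - v) * w.2 = D * x.2 := by
    simp only [hDdef, cross, Prod.fst_sub, Prod.snd_sub]
    ring
  have hlin : cross (x - v) (w - v) * lin A B u + cross (w - u) (x - u) * lin A B v
      + cross (u - v) (x - v) * lin A B w = D * lin A B x := by
    simp only [lin]
    linear_combination A * hx1 + B * hx2
  have key : D * (lin A B x - c') = cross (x - v) (w - v) * (lin A B u - c')
      + cross (w - u) (x - u) * (lin A B v - c')
      + cross (u - v) (x - v) * (lin A B w - c') := by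
    linear_combination c' * hsum - hlin
  have pos : 0 < D * (lin A B x - c') := by
    have t1 := mul_pos hnu (sub_pos.mpr hu)
    have t2 := mul_pos hnw (sub_pos.mpr hw)
    have t3 : 0 ≤ cross (w - u) (x - u) * (lin A B v - c') := by
      nlinarith [mul_nonneg (neg_nonneg.mpr hear) (neg_nonneg.mpr (by linarith : lin A B v - c' ≤ 0))]
    linarith [key]
  by_contra hcc
  push_neg at hcc
  have : D * (lin A B x - c') ≤ 0 := mul_nonpos_of_nonneg_of_nonpos hD.le (by linarith)
  linarith

/-- a vertex whose neighbors (and itself) are among the three lowest points is good -/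
lemma good_of {P : Finset (ℝ × ℝ)} (hP : GenPos P) (h3 : 3 ≤ P.card)
    {v : ℝ × ℝ} (hv : v ∈ Vset P) {A B c' : ℝ}
    (hvc : lin A B v ≤ c') (huc : lin A B (nbrU P v) ≤ c') (hwc : lin A B (nbrW P v) ≤ c')
    (hs : ∀ y ∈ P, lin A B y ≤ c' → (y = v ∨ y = nbrU P v ∨ y = nbrW P v)) :
    Good P v := by
  intro x hx hxv
  by_contra hc
  push_neg at hc
  obtain ⟨lu, lv, lw, hlu, hlv, hlw, hlsum, hxeq⟩ := tri hP h3 hv hx hxv hc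
  have hxlin : lin A B x ≤ c' := by
    have : lin A B x = lu * lin A B (nbrU P v) + lv * lin A B v + lw * lin A B (nbrW P v) := by
      rw [hxeq]
      simp only [lin, Prod.fst_add, Prod.snd_add, Prod.smul_fst, Prod.smul_snd, smul_eq_mul]
      ring
    rw [this]
    calc lu * lin A B (nbrU P v) + lv * lin A B v + lw * lin A B (nbrW P v)
        ≤ lu * c' + lv * c' + lw * c' :=
          add_le_add (add_le_add (mul_le_mul_of_nonneg_left huc (le_of_lt hlu))
            (mul_le_mul_of_nonneg_left hvc (le_of_lt hlv)))
            (mul_le_mul_of_nonneg_left hwc (le_of_lt hlw))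
      _ = c' := by linear_combination c' * hlsum
  rcases hs x hx hxlin with h | h | h
  · exact hxv h
  · rw [h] at hc
    have h0 : cross (nbrW P v - nbrU P v) (nbrU P v - nbrU P v) = 0 := by
      simp only [cross, sub_self, Prod.fst_zero, Prod.snd_zero]; ring
    rw [h0] at hc
    exact lt_irrefl _ hc
  · rw [h] at hc
    have h0 : cross (nbrW P v - nbrU P v) (nbrW P v - nbrU P v) = 0 := by
      simp only [cross]; ring
    rw [h0] at hc
    exact lt_irrefl _ hc

/-- existence of a maximal independent set of good vertices -/
lemma exists_B (P : Finset (ℝ × ℝ)) :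
    ∃ B : Finset (ℝ × ℝ), B ⊆ (Vset P).filter (Good P) ∧
      (∀ x ∈ B, ∀ y ∈ B, x ≠ y → ¬ AdjV P x y) ∧
      (∀ v ∈ (Vset P).filter (Good P), v ∉ B → ∃ b ∈ B, AdjV P v b) := by
  set F := ((Vset P).filter (Good P)).powerset.filter
    (fun s => ∀ x ∈ s, ∀ y ∈ s, x ≠ y → ¬ AdjV P x y) with hF
  have hne : F.Nonempty := ⟨∅, by simp [hF]⟩
  obtain ⟨B, hBF, hBmax⟩ := Finset.exists_max_image F Finset.card hne
  simp only [hF, Finset.mem_filter, Finset.mem_powerset] at hBF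
  refine ⟨B, hBF.1, hBF.2, fun v hv hvB => ?_⟩
  by_contra hc
  push_neg at hc
  have hins : insert v B ∈ F := by
    simp only [hF, Finset.mem_filter, Finset.mem_powerset]
    constructor
    · intro x hx
      rcases Finset.mem_insert.mp hx with h | h
      · exact h ▸ hv
      · exact hBF.1 h
    · intro x hx y hy hxy
      rcases Finset.mem_insert.mp hx with h1 | h1 <;> rcases Finset.mem_insert.mp hy with h2 | h2
      · exact absurd (h1.trans h2.symm) hxy
      · exact h1 ▸ hc y h2
      · exact h2 ▸ (fun hadj => hc x h1 (AdjV_symm hadj))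
      · exact hBF.2 x h1 y h2 hxy
  have := hBmax _ hins
  rw [Finset.card_insert_of_notMem hvB] at this
  omega

def Bset (P : Finset (ℝ × ℝ)) : Finset (ℝ × ℝ) := (exists_B P).choose

lemma Bset_spec (P : Finset (ℝ × ℝ)) :
    Bset P ⊆ (Vset P).filter (Good P) ∧
      (∀ x ∈ Bset P, ∀ y ∈ Bset P, x ≠ y → ¬ AdjV P x y) ∧
      (∀ v ∈ (Vset P).filter (Good P), v ∉ Bset P → ∃ b ∈ Bset P, AdjV P v b) :=
  (exists_B P).choose_spec

/-- the coloring -/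
def col (P : Finset (ℝ × ℝ)) (x : ℝ × ℝ) : Fin 2 :=
  if x ∈ Vset P ∧ x ∉ Bset P then 0 else 1


lemma col_red {P : Finset (ℝ × ℝ)} {x : ℝ × ℝ} (h1 : x ∈ Vset P) (h2 : x ∉ Bset P) :
    col P x = 0 := if_pos ⟨h1, h2⟩

lemma col_blue_of_not_mem {P : Finset (ℝ × ℝ)} {x : ℝ × ℝ} (h : x ∉ Vset P) : col P x = 1 :=
  if_neg (fun hc => h hc.1)

lemma col_blue_of_mem_B {P : Finset (ℝ × ℝ)} {x : ℝ × ℝ} (h : x ∈ Bset P) : col P x = 1 :=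
  if_neg (fun hc => hc.2 h)

/-- decomposition of a vector in a basis given by two non-parallel vectors -/
lemma basis2 {p q : ℝ × ℝ} (h : cross p q ≠ 0) (r : ℝ × ℝ) :
    ∃ lam nu : ℝ, r = lam • p + nu • q := by
  refine ⟨cross r q / cross p q, cross p r / cross p q, Prod.ext ?_ ?_⟩ <;>
    simp only [Prod.fst_add, Prod.snd_add, Prod.smul_fst, Prod.smul_snd, smul_eq_mul] <;>
    rw [div_mul_eq_mul_div, div_mul_eq_mul_div, ← add_div, eq_div_iff h] <;>
    simp only [cross] <;> ring

/-- determinant transfer identity -/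
lemma det_id (σ A B : ℝ) (s u v : ℝ × ℝ) :
    (σ * cross s u) * (A * v.1 + B * v.2) - (σ * cross s v) * (A * u.1 + B * u.2)
      = (-(σ * (A * s.1 + B * s.2))) * cross u v := by
  simp only [cross]; ring


lemma sign_transfer {d c2 c3 : ℝ} (h1 : 0 < d * c2) (h2 : 0 < c3 * c2) : 0 < d * c3 := by
  rcases mul_pos_iff.mp h1 with ⟨hd, hc⟩ | ⟨hd, hc⟩ <;>
    rcases mul_pos_iff.mp h2 with ⟨h3, hc'⟩ | ⟨h3, hc'⟩
  · exact mul_pos hd h3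
  · linarith
  · linarith
  · exact mul_pos_of_neg_of_neg hd h3

lemma sign_transfer_neg {d c2 c3 : ℝ} (h1 : d * c2 < 0) (h2 : 0 < c3 * c2) : d * c3 < 0 := by
  have h1' : 0 < (-d) * c2 := by linarith
  have := sign_transfer h1' h2
  linarith

set_option maxHeartbeats 2000000 in
/-- [C1]: the impossible configuration in the pure case -/
lemma c1_contra {P : Finset (ℝ × ℝ)} (hP : GenPos P) (h3 : 3 ≤ P.card) {A B : ℝ}
    {s1 s2 s3 y z : ℝ × ℝ}
    (hs1 : s1 ∈ P) (hs2 : s2 ∈ P) (hs3 : s3 ∈ P)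
    (h12 : s1 ≠ s2) (h13 : s1 ≠ s3) (h23 : s2 ≠ s3)
    (hs1V : s1 ∈ Vset P) (hs2V : s2 ∈ Vset P) (hs3V : s3 ∈ Vset P)
    (ho1 : lin A B s1 < lin A B s2) (ho2 : lin A B s2 < lin A B s3)
    (hrest : ∀ x ∈ P, x ≠ s1 → x ≠ s2 → x ≠ s3 → lin A B s3 < lin A B x)
    (hadj : AdjV P s1 s2)
    (hy : y = nbrU P s1 ∨ y = nbrW P s1) (hyne2 : y ≠ s2) (hylin : lin A B s3 < lin A B y)
    (hz : z = nbrU P s2 ∨ z = nbrW P s2) (hzne1 : z ≠ s1) (hzlin : lin A B s3 < lin A B z) :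
    False := by
  obtain ⟨hu1P, hw1P, hu1v, hw1v, hu1w1, hK1u, hK1w⟩ := nbr_spec hP h3 hs1V
  obtain ⟨hu2P, hw2P, hu2v, hw2v, hu2w2, hK2u, hK2w⟩ := nbr_spec hP h3 hs2V
  -- facts about y
  have hyP : y ∈ P := by rcases hy with h | h <;> rw [h] <;> assumption
  have hyV : y ∈ Vset P := by
    rcases hy with h | h <;> rw [h]
    · exact nbrU_mem_Vset hP h3 hs1V
    · exact nbrW_mem_Vset hP h3 hs1V
  have hys1 : y ≠ s1 := by rcases hy with h | h <;> rw [h] <;> assumption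
  have hys3 : y ≠ s3 := by
    intro h
    rw [h] at hylin
    exact lt_irrefl _ hylin
  have hyprod : ∀ x1, x1 ∈ P → ∀ x2, x2 ∈ P → x1 ≠ s1 → x1 ≠ y → x2 ≠ s1 → x2 ≠ y →
      0 < cross (y - s1) (x1 - s1) * cross (y - s1) (x2 - s1) := by
    intro x1 hx1 x2 hx2 h1 h2 h3' h4
    rcases hy with h | h
    · exact mul_pos (h ▸ hK1u x1 hx1 h1 (h ▸ h2)) (h ▸ hK1u x2 hx2 h3' (h ▸ h4))
    · exact mul_pos_of_neg_of_neg (h ▸ hK1w x1 hx1 h1 (h ▸ h2)) (h ▸ hK1w x2 hx2 h3' (h ▸ h4))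
  -- facts about z
  have hzP : z ∈ P := by rcases hz with h | h <;> rw [h] <;> assumption
  have hzV : z ∈ Vset P := by
    rcases hz with h | h <;> rw [h]
    · exact nbrU_mem_Vset hP h3 hs2V
    · exact nbrW_mem_Vset hP h3 hs2V
  have hzs2 : z ≠ s2 := by rcases hz with h | h <;> rw [h] <;> assumption
  have hzs3 : z ≠ s3 := by
    intro h
    rw [h] at hzlin
    exact lt_irrefl _ hzlin
  have hzprod : ∀ x1, x1 ∈ P → ∀ x2, x2 ∈ P → x1 ≠ s2 → x1 ≠ z → x2 ≠ s2 → x2 ≠ z →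
      0 < cross (z - s2) (x1 - s2) * cross (z - s2) (x2 - s2) := by
    intro x1 hx1 x2 hx2 h1 h2 h3' h4
    rcases hz with h | h
    · exact mul_pos (h ▸ hK2u x1 hx1 h1 (h ▸ h2)) (h ▸ hK2u x2 hx2 h3' (h ▸ h4))
    · exact mul_pos_of_neg_of_neg (h ▸ hK2w x1 hx1 h1 (h ▸ h2)) (h ▸ hK2w x2 hx2 h3' (h ▸ h4))
  -- the sign σ from adjacency of s1 s2
  obtain ⟨σ, hξpos⟩ : ∃ σ : ℝ, ∀ q ∈ Vset P, q ≠ s1 → q ≠ s2 →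
      0 < σ * cross (s2 - s1) (q - s1) := by
    rcases hadj with h | h
    · exact ⟨1, fun q hq h1 h2 => by
        have := h q hq h1 h2
        linarith⟩
    · exact ⟨-1, fun q hq h1 h2 => by
        have := h q hq h1 h2
        nlinarith⟩
  set η := lin A B with hη
  set e := σ * cross (s2 - s1) (s3 - s1) with he_def
  set av := σ * cross (s2 - s1) (y - s1) with ha_def
  set bv := σ * cross (s2 - s1) (z - s1) with hb_def
  have he : 0 < e := hξpos s3 hs3V (Ne.symm h13) (Ne.symm h23)
  have ha : 0 < av := hξpos y hyV hys1 hyne2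
  have hb : 0 < bv := hξpos z hzV hzne1 hzs2
  have hξs2 : σ * cross (s2 - s1) (s2 - s1) = 0 := by
    simp only [cross]; ring
  -- the transferred sign inequalities (i) and (ii)
  have hd1 : ∀ x : ℝ × ℝ, av * (η x - η s1) - (σ * cross (s2 - s1) (x - s1)) * (η y - η s1)
      = (-(σ * (η s2 - η s1))) * cross (y - s1) (x - s1) := by
    intro x
    simp only [ha_def, hη, cross, lin, Prod.fst_sub, Prod.snd_sub]
    ring
  have hd2 : ∀ x : ℝ × ℝ, bv * (η x - η s2) - (σ * cross (s2 - s1) (x - s1)) * (η z - η s2)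
      = (-(σ * (η s2 - η s1))) * cross (z - s2) (x - s2) := by
    intro x
    simp only [hb_def, hη, cross, lin, Prod.fst_sub, Prod.snd_sub]
    ring
  set d := -(σ * (η s2 - η s1)) with hd_def
  have hdc2 : 0 < d * cross (y - s1) (s2 - s1) := by
    have h1 := hd1 s2
    rw [hξs2] at h1
    have h2 : 0 < av * (η s2 - η s1) := mul_pos ha (by linarith)
    linarith [h1, h2]
  have hdc3 : 0 < d * cross (y - s1) (s3 - s1) := by
    apply sign_transfer hdc2
    exact hyprod s3 hs3 s2 hs2 (Ne.symm h13) hys3.symm (Ne.symm h12) (Ne.symm hyne2)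
  have hi : e * (η y - η s1) < av * (η s3 - η s1) := by
    have h1 := hd1 s3
    rw [← he_def] at h1
    linarith [h1, hdc3]
  have hξs1 : σ * cross (s2 - s1) (s1 - s1) = 0 := by
    simp only [cross, sub_self, Prod.fst_zero, Prod.snd_zero]; ring
  have hdz1 : d * cross (z - s2) (s1 - s2) < 0 := by
    have h1 := hd2 s1
    rw [hξs1] at h1
    have h2 : bv * (η s1 - η s2) < 0 := mul_neg_of_pos_of_neg hb (by linarith)
    linarith [h1, h2]
  have hdz3 : d * cross (z - s2) (s3 - s2) < 0 := by
    apply sign_transfer_neg hdz1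
    exact hzprod s3 hs3 s1 hs1 (Ne.symm h23) hzs3.symm h12 (Ne.symm hzne1)
  have hii : bv * (η s3 - η s2) < e * (η z - η s2) := by
    have h1 := hd2 s3
    rw [← he_def] at h1
    linarith [h1, hdz3]
  -- separation of s3
  obtain ⟨c1, c2, hsep⟩ := vertex_sep hs3V
  set μ := lin c1 c2 with hμ
  have hA1 : 0 < μ s1 - μ s3 := hsep s1 hs1 h13
  have hA2 : 0 < μ s2 - μ s3 := hsep s2 hs2 h23
  have hA3 : 0 < μ y - μ s3 := hsep y hyP hys3
  have hA4 : 0 < μ z - μ s3 := hsep z hzP hzs3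
  -- decomposition μ = α ξ + β η
  have hΔ : cross (s2 - s1) (y - s1) ≠ 0 := by
    intro h0
    rw [ha_def, h0, mul_zero] at ha
    exact lt_irrefl _ ha
  have h21 : η s2 - η s1 ≠ 0 := by
    have : η s1 < η s2 := ho1
    linarith
  set β := (μ s2 - μ s1) / (η s2 - η s1) with hβ_def
  set α := (μ y - μ s1 - β * (η y - η s1)) / av with hα_def
  have hαa : α * av = μ y - μ s1 - β * (η y - η s1) := by
    rw [hα_def]
    field_simp
  have hβh : β * (η s2 - η s1) = μ s2 - μ s1 := by
    rw [hβ_def]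
    field_simp
  have hident : ∀ x : ℝ × ℝ, μ x - μ s1 = α * (σ * cross (s2 - s1) (x - s1))
      + β * (η x - η s1) := by
    intro x
    obtain ⟨lam, nu, hlv⟩ := basis2 hΔ (x - s1)
    have hcx1 : x.1 - s1.1 = lam * (s2.1 - s1.1) + nu * (y.1 - s1.1) := by
      have := congrArg Prod.fst hlv
      simpa [Prod.fst_sub, Prod.fst_add, Prod.smul_fst, smul_eq_mul] using this
    have hcx2 : x.2 - s1.2 = lam * (s2.2 - s1.2) + nu * (y.2 - s1.2) := by
      have := congrArg Prod.snd hlv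
      simpa [Prod.snd_sub, Prod.snd_add, Prod.smul_snd, smul_eq_mul] using this
    have hξx : σ * cross (s2 - s1) (x - s1) = nu * av := by
      rw [ha_def]
      simp only [cross, Prod.fst_sub, Prod.snd_sub]
      linear_combination (σ * (s2.1 - s1.1)) * hcx2 - (σ * (s2.2 - s1.2)) * hcx1
    have hμx : μ x - μ s1 = lam * (μ s2 - μ s1) + nu * (μ y - μ s1) := by
      rw [hμ]
      simp only [lin]
      linear_combination c1 * hcx1 + c2 * hcx2
    have hηx : η x - η s1 = lam * (η s2 - η s1) + nu * (η y - η s1) := by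
      rw [hη]
      simp only [lin]
      linear_combination A * hcx1 + B * hcx2
    rw [hξx, hμx, hηx]
    linear_combination nu * hαa.symm + lam * hβh.symm
  have hid2 := hident s2
  have hid3 := hident s3
  have hidy := hident y
  have hidz := hident z
  rw [hξs2] at hid2
  rw [← he_def] at hid3
  rw [← ha_def] at hidy
  rw [← hb_def] at hidz
  have hA1' : α * e + β * (η s3 - η s1) < 0 := by linarith [hid3, hA1]
  have hA2' : 0 < -(α * e) + β * (η s2 - η s3) := by linarith [hid2, hid3, hA2]
  have hA3' : 0 < α * (av - e) + β * (η y - η s3) := by nlinarith [hidy, hid3, hA3]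
  have hA4' : 0 < α * (bv - e) + β * (η z - η s3) := by nlinarith [hidz, hid3, hA4]
  have hae : e < av := by nlinarith [hi, he, hylin, ho1, ho2]
  rcases le_or_gt 0 β with hβsgn | hβsgn
  · have hαneg : α < 0 := by nlinarith [hA2', mul_nonneg hβsgn (by linarith : (0:ℝ) ≤ η s3 - η s2)]
    have hβpos : 0 < β := by nlinarith [hA3', mul_pos (neg_pos.mpr hαneg) (sub_pos.mpr hae)]
    have t1 : (α * e + β * (η s3 - η s1)) * (av - e) < 0 :=
      mul_neg_of_neg_of_pos hA1' (sub_pos.mpr hae)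
    have t2 : 0 < (α * (av - e) + β * (η y - η s3)) * e := mul_pos hA3' he
    nlinarith [t1, t2, hi, hβpos]
  · rcases le_or_gt α 0 with hαsgn | hαsgn
    · have t1 : α * (av - e) ≤ 0 := mul_nonpos_iff.mpr (Or.inr ⟨hαsgn, (sub_pos.mpr hae).le⟩)
      have t2 : β * (η y - η s3) < 0 := mul_neg_of_neg_of_pos hβsgn (by linarith)
      linarith [hA3', t1, t2]
    · have heb : e < bv := by
        nlinarith [hA4', mul_neg_of_neg_of_pos hβsgn (by linarith : (0:ℝ) < η z - η s3), hαsgn]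
      have t1 : 0 < (α * (bv - e) + β * (η z - η s3)) * e := mul_pos hA4' he
      have t2 : 0 < (-(α * e) + β * (η s2 - η s3)) * (bv - e) := mul_pos hA2' (sub_pos.mpr heb)
      nlinarith [t1, t2, hii, hβsgn]

/-- the main core lemma: the coloring works for strict bottom-3 triples -/
lemma maincore {P : Finset (ℝ × ℝ)} (hP : GenPos P) (h3 : 3 ≤ P.card)
    {A B : ℝ} {s1 s2 s3 : ℝ × ℝ}
    (hs1 : s1 ∈ P) (hs2 : s2 ∈ P) (hs3 : s3 ∈ P)
    (ho1 : lin A B s1 < lin A B s2) (ho2 : lin A B s2 < lin A B s3)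
    (hrest : ∀ x ∈ P, x ≠ s1 → x ≠ s2 → x ≠ s3 → lin A B s3 < lin A B x)
    (hinj : ∀ p ∈ P, ∀ q ∈ P, p ≠ q → lin A B p ≠ lin A B q) :
    ∃ p q : ℝ × ℝ, (p = s1 ∨ p = s2 ∨ p = s3) ∧ (q = s1 ∨ q = s2 ∨ q = s3) ∧
      col P p ≠ col P q := by
  obtain ⟨hBsub, hBindep, hBmax⟩ := Bset_spec P
  have hne12 : s1 ≠ s2 := fun h => by rw [h] at ho1; exact lt_irrefl _ ho1
  have hne23 : s2 ≠ s3 := fun h => by rw [h] at ho2; exact lt_irrefl _ ho2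
  have hne13 : s1 ≠ s3 := fun h => by
    rw [h] at ho1
    exact lt_irrefl _ (ho1.trans ho2)
  have hmin1 : ∀ q ∈ P, q ≠ s1 → lin A B s1 < lin A B q := by
    intro q hq hq1
    by_cases h2 : q = s2
    · rw [h2]; exact ho1
    by_cases h3' : q = s3
    · rw [h3']; exact ho1.trans ho2
    exact (ho1.trans ho2).trans (hrest q hq hq1 h2 h3')
  have hlow : ∀ x ∈ P, lin A B x ≤ lin A B s3 → (x = s1 ∨ x = s2 ∨ x = s3) := by
    intro x hx hle
    by_contra hc
    push_neg at hc
    have := hrest x hx hc.1 hc.2.1 hc.2.2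
    linarith
  have hs1V : s1 ∈ Vset P := min_mem_Vset hs1 hmin1
  have h01 : (0 : Fin 2) ≠ 1 := by decide
  by_cases h2V : s2 ∈ Vset P
  · -- s2 is a vertex : s1 s2 adjacent
    have hmin2 : ∀ q ∈ Vset P, q ≠ s1 → q ≠ s2 → lin A B s2 < lin A B q := by
      intro q hqV hq1 hq2
      have hqP := Vset_subset P hqV
      by_cases hq3 : q = s3
      · rw [hq3]; exact ho2
      · exact ho2.trans (hrest q hqP hq1 hq2 hq3)
    have hadj : AdjV P s1 s2 :=
      adj_two_lowest hP hinj hs1 hs1V h2V (Ne.symm hne12) hmin1 hmin2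
    have hred : s1 ∉ Bset P ∨ s2 ∉ Bset P := by
      by_contra hc
      push_neg at hc
      exact hBindep s1 hc.1 s2 hc.2 hne12 hadj
    by_cases h3V : s3 ∈ Vset P
    · -- pure case
      have hchar1 : s2 = nbrU P s1 ∨ s2 = nbrW P s1 :=
        adj_char hP h3 hs1V hs2 (Ne.symm hne12) hadj
      have hchar2 : s1 = nbrU P s2 ∨ s1 = nbrW P s2 :=
        adj_char hP h3 h2V hs1 hne12 (AdjV_symm hadj)
      obtain ⟨hu1P, hw1P, hu1v, hw1v, hu1w1, hK1u, hK1w⟩ := nbr_spec hP h3 hs1V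
      obtain ⟨hu2P, hw2P, hu2v, hw2v, hu2w2, hK2u, hK2w⟩ := nbr_spec hP h3 h2V
      -- define y : the other neighbor of s1
      obtain ⟨y, hy, hyne2⟩ : ∃ y, (y = nbrU P s1 ∨ y = nbrW P s1) ∧ y ≠ s2 := by
        rcases hchar1 with h | h
        · exact ⟨nbrW P s1, Or.inr rfl, by rw [h]; exact Ne.symm hu1w1⟩
        · exact ⟨nbrU P s1, Or.inl rfl, by rw [h]; exact hu1w1⟩
      obtain ⟨z, hz, hzne1⟩ : ∃ z, (z = nbrU P s2 ∨ z = nbrW P s2) ∧ z ≠ s1 := by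
        rcases hchar2 with h | h
        · exact ⟨nbrW P s2, Or.inr rfl, by rw [h]; exact Ne.symm hu2w2⟩
        · exact ⟨nbrU P s2, Or.inl rfl, by rw [h]; exact hu2w2⟩
      have hyP : y ∈ P := by rcases hy with h | h <;> rw [h] <;> assumption
      have hzP : z ∈ P := by rcases hz with h | h <;> rw [h] <;> assumption
      have hys1 : y ≠ s1 := by rcases hy with h | h <;> rw [h] <;> assumption
      have hzs2 : z ≠ s2 := by rcases hz with h | h <;> rw [h] <;> assumption
      by_cases hyc : lin A B y ≤ lin A B s3
      · -- y = s3, s1 is good with neighbors s2 s3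
        have hy3 : y = s3 := by
          rcases hlow y hyP hyc with h | h | h
          · exact absurd h hys1
          · exact absurd h hyne2
          · exact h
        have hgood : Good P s1 := by
          apply good_of hP h3 hs1V (A := A) (B := B) (c' := lin A B s3)
          · linarith
          · rcases hchar1 with h | h
            · rw [← h]; linarith
            · rcases hy with h' | h'
              · rw [← h', hy3]
              · rw [← h'] at h
                exact absurd (h.symm) hyne2
          · rcases hchar1 with h | h
            · rcases hy with h' | h'
              · rw [← h'] at h
                exact absurd h.symm hyne2
              · rw [← h', hy3]
            · rw [← h]; linarith
          · intro q hq hqle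
            rcases hlow q hq hqle with h | h | h
            · exact Or.inl h
            · rcases hchar1 with hc | hc
              · exact Or.inr (Or.inl (h.trans hc))
              · exact Or.inr (Or.inr (h.trans hc))
            · rw [← hy3] at h
              rcases hy with hc | hc
              · exact Or.inr (Or.inl (h.trans hc))
              · exact Or.inr (Or.inr (h.trans hc))
        by_cases hs1B : s1 ∈ Bset P
        · -- s1 blue, s2 must be red
          have hs2notB : s2 ∉ Bset P := by
            rcases hred with h | h
            · exact absurd hs1B h
            · exact h
          exact ⟨s2, s1, Or.inr (Or.inl rfl), Or.inl rfl, by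
            rw [col_red h2V hs2notB, col_blue_of_mem_B hs1B]
            exact h01⟩
        · -- s1 red; a blue blocking neighbor of s1 is s2 or s3
          obtain ⟨bb, hbbB, hbbadj⟩ := hBmax s1 (Finset.mem_filter.mpr ⟨hs1V, hgood⟩) hs1B
          have hbbP : bb ∈ P := Vset_subset P (Finset.mem_filter.mp (hBsub hbbB)).1
          have hbbne : bb ≠ s1 := fun h => hs1B (h ▸ hbbB)
          have hbbchar : bb = nbrU P s1 ∨ bb = nbrW P s1 :=
            adj_char hP h3 hs1V hbbP hbbne hbbadj
          have hbb23 : bb = s2 ∨ bb = s3 := by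
            rcases hchar1 with hc | hc
            · have hyW : y = nbrW P s1 := by
                rcases hy with h' | h'
                · exact absurd (h'.trans hc.symm) hyne2
                · exact h'
              rcases hbbchar with h | h
              · exact Or.inl (h.trans hc.symm)
              · exact Or.inr ((h.trans hyW.symm).trans hy3)
            · have hyU : y = nbrU P s1 := by
                rcases hy with h' | h'
                · exact h'
                · exact absurd (h'.trans hc.symm) hyne2
              rcases hbbchar with h | h
              · exact Or.inr ((h.trans hyU.symm).trans hy3)
              · exact Or.inl (h.trans hc.symm)
          refine ⟨s1, bb, Or.inl rfl, ?_, ?_⟩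
          · rcases hbb23 with h | h
            · exact Or.inr (Or.inl h)
            · exact Or.inr (Or.inr h)
          · rw [col_red hs1V hs1B, col_blue_of_mem_B hbbB]
            exact h01
      · push_neg at hyc
        by_cases hzc : lin A B z ≤ lin A B s3
        · -- z = s3, s2 is good with neighbors s1 s3
          have hz3 : z = s3 := by
            rcases hlow z hzP hzc with h | h | h
            · exact absurd h hzne1
            · exact absurd h hzs2
            · exact h
          have hgood : Good P s2 := by
            apply good_of hP h3 h2V (A := A) (B := B) (c' := lin A B s3)
            · linarith
            · rcases hchar2 with h | h
              · rw [← h]; linarith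
              · rcases hz with h' | h'
                · rw [← h', hz3]
                · rw [← h'] at h
                  exact absurd h.symm hzne1
            · rcases hchar2 with h | h
              · rcases hz with h' | h'
                · rw [← h'] at h
                  exact absurd h.symm hzne1
                · rw [← h', hz3]
              · rw [← h]; linarith
            · intro q hq hqle
              rcases hlow q hq hqle with h | h | h
              · rcases hchar2 with hc | hc
                · exact Or.inr (Or.inl (h.trans hc))
                · exact Or.inr (Or.inr (h.trans hc))
              · exact Or.inl h
              · rw [← hz3] at h
                rcases hz with hc | hc
                · exact Or.inr (Or.inl (h.trans hc))
                · exact Or.inr (Or.inr (h.trans hc))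
          by_cases hs2B : s2 ∈ Bset P
          · have hs1notB : s1 ∉ Bset P := by
              rcases hred with h | h
              · exact h
              · exact absurd hs2B h
            exact ⟨s1, s2, Or.inl rfl, Or.inr (Or.inl rfl), by
              rw [col_red hs1V hs1notB, col_blue_of_mem_B hs2B]
              exact h01⟩
          · obtain ⟨bb, hbbB, hbbadj⟩ := hBmax s2 (Finset.mem_filter.mpr ⟨h2V, hgood⟩) hs2B
            have hbbP : bb ∈ P := Vset_subset P (Finset.mem_filter.mp (hBsub hbbB)).1
            have hbbne : bb ≠ s2 := fun h => hs2B (h ▸ hbbB)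
            have hbbchar : bb = nbrU P s2 ∨ bb = nbrW P s2 :=
              adj_char hP h3 h2V hbbP hbbne hbbadj
            have hbb13 : bb = s1 ∨ bb = s3 := by
              rcases hchar2 with hc | hc
              · have hzW : z = nbrW P s2 := by
                  rcases hz with h' | h'
                  · exact absurd (h'.trans hc.symm) hzne1
                  · exact h'
                rcases hbbchar with h | h
                · exact Or.inl (h.trans hc.symm)
                · exact Or.inr ((h.trans hzW.symm).trans hz3)
              · have hzU : z = nbrU P s2 := by
                  rcases hz with h' | h'
                  · exact h'
                  · exact absurd (h'.trans hc.symm) hzne1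
                rcases hbbchar with h | h
                · exact Or.inr ((h.trans hzU.symm).trans hz3)
                · exact Or.inl (h.trans hc.symm)
            refine ⟨s2, bb, Or.inr (Or.inl rfl), ?_, ?_⟩
            · rcases hbb13 with h | h
              · exact Or.inl h
              · exact Or.inr (Or.inr h)
            · rw [col_red h2V hs2B, col_blue_of_mem_B hbbB]
              exact h01
        · push_neg at hzc
          exact absurd (c1_contra hP h3 hs1 hs2 hs3 hne12 hne13 hne23 hs1V h2V h3V ho1 ho2
            hrest hadj hy hyne2 hyc hz hzne1 hzc) (fun h => h)
    · -- s3 not a vertex : s3 blue, one of s1 s2 red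
      rcases hred with h | h
      · exact ⟨s1, s3, Or.inl rfl, Or.inr (Or.inr rfl), by
          rw [col_red hs1V h, col_blue_of_not_mem h3V]
          exact h01⟩
      · exact ⟨s2, s3, Or.inr (Or.inl rfl), Or.inr (Or.inr rfl), by
          rw [col_red h2V h, col_blue_of_not_mem h3V]
          exact h01⟩
  · -- s2 not a vertex : s2 blue
    by_cases h3V : s3 ∈ Vset P
    · -- s3 vertex : s1 s3 adjacent, one of them red
      have hmin2 : ∀ q ∈ Vset P, q ≠ s1 → q ≠ s3 → lin A B s3 < lin A B q := by
        intro q hqV hq1 hq3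
        have hqP := Vset_subset P hqV
        have hq2 : q ≠ s2 := fun h => h2V (h ▸ hqV)
        exact hrest q hqP hq1 hq2 hq3
      have hadj : AdjV P s1 s3 :=
        adj_two_lowest hP hinj hs1 hs1V h3V (Ne.symm hne13) hmin1 hmin2
      have hred : s1 ∉ Bset P ∨ s3 ∉ Bset P := by
        by_contra hc
        push_neg at hc
        exact hBindep s1 hc.1 s3 hc.2 hne13 hadj
      rcases hred with h | h
      · exact ⟨s1, s2, Or.inl rfl, Or.inr (Or.inl rfl), by
          rw [col_red hs1V h, col_blue_of_not_mem h2V]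
          exact h01⟩
      · exact ⟨s3, s2, Or.inr (Or.inr rfl), Or.inr (Or.inl rfl), by
          rw [col_red h3V h, col_blue_of_not_mem h2V]
          exact h01⟩
    · -- neither s2 nor s3 vertex : s1 is bad hence red, s2 blue
      obtain ⟨hu1P, hw1P, hu1v, hw1v, hu1w1, hK1u, hK1w⟩ := nbr_spec hP h3 hs1V
      have huV : nbrU P s1 ∈ Vset P := nbrU_mem_Vset hP h3 hs1V
      have hwV : nbrW P s1 ∈ Vset P := nbrW_mem_Vset hP h3 hs1V
      have hulin : lin A B s3 < lin A B (nbrU P s1) := by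
        apply hrest _ hu1P hu1v
        · intro h
          exact h2V (h ▸ huV)
        · intro h
          exact h3V (h ▸ huV)
      have hwlin : lin A B s3 < lin A B (nbrW P s1) := by
        apply hrest _ hw1P hw1v
        · intro h
          exact h2V (h ▸ hwV)
        · intro h
          exact h3V (h ▸ hwV)
      have hs1notB : s1 ∉ Bset P := by
        intro hs1B
        have hgood : Good P s1 := (Finset.mem_filter.mp (hBsub hs1B)).2
        have hear := hgood s2 hs2 (Ne.symm hne12)
        have := far hP h3 hs1V hs2 (Ne.symm hne12)
          (fun h => h2V (h ▸ huV)) (fun h => h2V (h ▸ hwV)) hear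
          (A := A) (B := B) (c' := lin A B s3) hulin hwlin (by linarith)
        linarith
      exact ⟨s1, s2, Or.inl rfl, Or.inr (Or.inl rfl), by
        rw [col_red hs1V hs1notB, col_blue_of_not_mem h2V]
        exact h01⟩

/-- genericity: perturbing the functional to an injective one keeping bottom-3 inside -/
lemma generic {P : Finset (ℝ × ℝ)} (h3 : 3 ≤ P.card) {a b c : ℝ}
    (hab : (a, b) ≠ ((0:ℝ), (0:ℝ))) (hn : 3 ≤ (halfPlane a b c ∩ ↑P).ncard) :
    ∃ A B : ℝ, ∃ s1 s2 s3 : ℝ × ℝ, s1 ∈ P ∧ s2 ∈ P ∧ s3 ∈ P ∧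
      s1 ∈ halfPlane a b c ∧ s2 ∈ halfPlane a b c ∧ s3 ∈ halfPlane a b c ∧
      lin A B s1 < lin A B s2 ∧ lin A B s2 < lin A B s3 ∧
      (∀ x ∈ P, x ≠ s1 → x ≠ s2 → x ≠ s3 → lin A B s3 < lin A B x) ∧
      (∀ p ∈ P, ∀ q ∈ P, p ≠ q → lin A B p ≠ lin A B q) := by
  have hab' : ¬(a = 0 ∧ b = 0) := by
    intro h
    exact hab (by rw [h.1, h.2])
  have hK : (0:ℝ) < a ^ 2 + b ^ 2 := by
    rcases not_and_or.mp hab' with h | h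
    · positivity
    · positivity
  -- choose a small perturbation t
  set g : (ℝ × ℝ) × (ℝ × ℝ) → ℝ :=
    fun pq => (lin a b pq.2 - lin a b pq.1) / (|lin (-b) a pq.2 - lin (-b) a pq.1| + 1)
    with hg
  obtain ⟨t, ht, hpres'⟩ : ∃ t : ℝ, 0 < t ∧ ∀ p ∈ P, ∀ q ∈ P, lin a b p < lin a b q →
      lin a b p + t * lin (-b) a p < lin a b q + t * lin (-b) a q := by
    set F := (P ×ˢ P).filter (fun pq => lin a b pq.1 < lin a b pq.2) with hF
    by_cases hFne : F.Nonempty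
    · have hGne : (F.image g).Nonempty := hFne.image g
      set δ := (F.image g).min' hGne with hδ
      have hδpos : 0 < δ := by
        rw [hδ]
        obtain ⟨pq, hpq, hpqeq⟩ := Finset.mem_image.mp ((F.image g).min'_mem hGne)
        rw [← hpqeq, hg]
        have := (Finset.mem_filter.mp hpq).2
        exact div_pos (by linarith) (by positivity)
      refine ⟨δ / 2, by linarith, fun p hp q hq hlt => ?_⟩
      have hmem : (p, q) ∈ F :=
        Finset.mem_filter.mpr ⟨Finset.mem_product.mpr ⟨hp, hq⟩, hlt⟩
      have h1 : δ / 2 < g (p, q) :=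
        lt_of_lt_of_le (by linarith) (Finset.min'_le _ _ (Finset.mem_image_of_mem g hmem))
      rw [hg] at h1
      simp only at h1
      have hDpos : (0:ℝ) < |lin (-b) a q - lin (-b) a p| + 1 := by positivity
      rw [lt_div_iff₀ hDpos] at h1
      have h2 : (δ / 2) * (lin (-b) a p - lin (-b) a q) ≤ (δ / 2) * |lin (-b) a q - lin (-b) a p| := by
        apply mul_le_mul_of_nonneg_left _ (by linarith)
        rw [abs_sub_comm]
        exact le_abs_self _
      nlinarith
    · refine ⟨1, one_pos, fun p hp q hq hlt => absurd ?_ hFne⟩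
      exact ⟨(p, q), Finset.mem_filter.mpr ⟨Finset.mem_product.mpr ⟨hp, hq⟩, hlt⟩⟩
  set A := a - t * b with hA
  set B := b + t * a with hB
  have hlt : ∀ x : ℝ × ℝ, lin A B x = lin a b x + t * lin (-b) a x := by
    intro x
    simp only [lin, hA, hB]
    ring
  have hpres : ∀ p ∈ P, ∀ q ∈ P, lin a b p < lin a b q → lin A B p < lin A B q := by
    intro p hp q hq h
    rw [hlt, hlt]
    exact hpres' p hp q hq h
  have hinj : ∀ p ∈ P, ∀ q ∈ P, p ≠ q → lin A B p ≠ lin A B q := by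
    intro p hp q hq hpq
    rcases lt_trichotomy (lin a b p) (lin a b q) with h | h | h
    · exact ne_of_lt (hpres p hp q hq h)
    · intro heq
      rw [hlt, hlt, h] at heq
      have h2 : lin (-b) a p = lin (-b) a q := by
        have := mul_left_cancel₀ (ne_of_gt ht) (by linarith : t * lin (-b) a p = t * lin (-b) a q)
        exact this
      apply hpq
      have e1 : a * p.1 + b * p.2 = a * q.1 + b * q.2 := h
      have e2 : -b * p.1 + a * p.2 = -b * q.1 + a * q.2 := h2
      have hc1 : (a ^ 2 + b ^ 2) * (p.1 - q.1) = 0 := by linear_combination a * e1 - b * e2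
      have hc2 : (a ^ 2 + b ^ 2) * (p.2 - q.2) = 0 := by linear_combination b * e1 + a * e2
      apply Prod.ext
      · rcases mul_eq_zero.mp hc1 with h' | h'
        · exact absurd h' (ne_of_gt hK)
        · linarith
      · rcases mul_eq_zero.mp hc2 with h' | h'
        · exact absurd h' (ne_of_gt hK)
        · linarith
    · exact ne_of_gt (hpres q hq p hp h)
  -- the three minimal points
  have hP1 : P.Nonempty := Finset.card_pos.mp (by omega)
  obtain ⟨s1, hs1, hmin1⟩ := Finset.exists_min_image P (lin A B) hP1
  have hP2 : (P.erase s1).Nonempty := by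
    rw [← Finset.card_pos, Finset.card_erase_of_mem hs1]
    omega
  obtain ⟨s2, hs2', hmin2⟩ := Finset.exists_min_image (P.erase s1) (lin A B) hP2
  have hP3 : ((P.erase s1).erase s2).Nonempty := by
    rw [← Finset.card_pos, Finset.card_erase_of_mem hs2', Finset.card_erase_of_mem hs1]
    omega
  obtain ⟨s3, hs3', hmin3⟩ := Finset.exists_min_image ((P.erase s1).erase s2) (lin A B) hP3
  have hs2P : s2 ∈ P := (Finset.mem_erase.mp hs2').2
  have hs3P : s3 ∈ P := (Finset.mem_erase.mp (Finset.mem_erase.mp hs3').2).2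
  have h12 : s2 ≠ s1 := (Finset.mem_erase.mp hs2').1
  have h32 : s3 ≠ s2 := (Finset.mem_erase.mp hs3').1
  have h31 : s3 ≠ s1 := (Finset.mem_erase.mp (Finset.mem_erase.mp hs3').2).1
  have ho1 : lin A B s1 < lin A B s2 :=
    lt_of_le_of_ne (hmin1 s2 hs2P) (hinj s1 hs1 s2 hs2P (Ne.symm h12))
  have ho2 : lin A B s2 < lin A B s3 :=
    lt_of_le_of_ne (hmin2 s3 (Finset.mem_erase.mp hs3').2) (hinj s2 hs2P s3 hs3P (Ne.symm h32))
  have hrest : ∀ x ∈ P, x ≠ s1 → x ≠ s2 → x ≠ s3 → lin A B s3 < lin A B x := by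
    intro x hx hx1 hx2 hx3
    have hx' : x ∈ (P.erase s1).erase s2 :=
      Finset.mem_erase.mpr ⟨hx2, Finset.mem_erase.mpr ⟨hx1, hx⟩⟩
    exact lt_of_le_of_ne (hmin3 x hx') (hinj s3 hs3P x hx (Ne.symm hx3))
  -- the three minimal points are in the halfplane
  obtain ⟨T, hTsub, hTcard⟩ := Set.exists_subset_card_eq hn
  obtain ⟨x1, x2, x3, hx12, hx13, hx23, hTeq⟩ := Set.ncard_eq_three.mp hTcard
  have hx1m : x1 ∈ halfPlane a b c ∩ ↑P := hTsub (by rw [hTeq]; simp)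
  have hx2m : x2 ∈ halfPlane a b c ∩ ↑P := hTsub (by rw [hTeq]; simp)
  have hx3m : x3 ∈ halfPlane a b c ∩ ↑P := hTsub (by rw [hTeq]; simp)
  have hhm : ∀ x : ℝ × ℝ, x ∈ halfPlane a b c ↔ lin a b x ≤ c := by
    intro x
    rfl
  have hsin : ∀ i : ℝ × ℝ, i ∈ P → (∀ x ∈ P, lin A B x < lin A B i →
      (x = s1 ∨ x = s2)) → i ∈ halfPlane a b c := by
    intro i hi hbelow
    rw [hhm]
    by_contra hc
    push_neg at hc
    have key : ∀ x : ℝ × ℝ, x ∈ halfPlane a b c ∩ ↑P → (x = s1 ∨ x = s2) := by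
      intro x hx
      apply hbelow x hx.2
      apply hpres x hx.2 i hi
      calc lin a b x ≤ c := (hhm x).mp hx.1
        _ < lin a b i := hc
    rcases key x1 hx1m with h1 | h1 <;> rcases key x2 hx2m with h2 | h2 <;>
      rcases key x3 hx3m with h3 | h3 <;>
      first
        | exact absurd (h1.trans h2.symm) hx12
        | exact absurd (h1.trans h3.symm) hx13
        | exact absurd (h2.trans h3.symm) hx23
  have hs1h : s1 ∈ halfPlane a b c := by
    apply hsin s1 hs1
    intro x hx hlt
    exact absurd (hmin1 x hx) (not_le.mpr hlt)
  have hs2h : s2 ∈ halfPlane a b c := by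
    apply hsin s2 hs2P
    intro x hx hlt
    by_cases h : x = s1
    · exact Or.inl h
    · exact absurd (hmin2 x (Finset.mem_erase.mpr ⟨h, hx⟩)) (not_le.mpr hlt)
  have hs3h : s3 ∈ halfPlane a b c := by
    apply hsin s3 hs3P
    intro x hx hlt
    by_cases h : x = s1
    · exact Or.inl h
    by_cases h2 : x = s2
    · exact Or.inr h2
    exact absurd (hmin3 x (Finset.mem_erase.mpr ⟨h2, Finset.mem_erase.mpr ⟨h, hx⟩⟩))
      (not_le.mpr hlt)
  exact ⟨A, B, s1, s2, s3, hs1, hs2P, hs3P, hs1h, hs2h, hs3h, ho1, ho2, hrest, hinj⟩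

end Stmt10Aux

open Stmt10Aux in
theorem stmt10 (P : Finset (ℝ × ℝ)) (hP : GenPos P) :
    ∃ f : ℝ × ℝ → Fin 2, ∀ a b c : ℝ, (a, b) ≠ ((0 : ℝ), (0 : ℝ)) →
      3 ≤ (halfPlane a b c ∩ ↑P).ncard →
      ∃ p ∈ P, ∃ q ∈ P, p ∈ halfPlane a b c ∧ q ∈ halfPlane a b c ∧ f p ≠ f q := by
  by_cases h3 : 3 ≤ P.card
  · refine ⟨col P, fun a b c hab hn => ?_⟩
    obtain ⟨A, B, s1, s2, s3, hs1, hs2, hs3, hh1, hh2, hh3, ho1, ho2, hrest, hinj⟩ :=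
      generic h3 hab hn
    obtain ⟨p, q, hp, hq, hpq⟩ := maincore hP h3 hs1 hs2 hs3 ho1 ho2 hrest hinj
    refine ⟨p, ?_, q, ?_, ?_, ?_, hpq⟩
    · rcases hp with h | h | h <;> subst h <;> assumption
    · rcases hq with h | h | h <;> subst h <;> assumption
    · rcases hp with h | h | h <;> subst h <;> assumption
    · rcases hq with h | h | h <;> subst h <;> assumption
  · refine ⟨fun _ => 0, fun a b c hab hn => absurd hn ?_⟩
    push_neg
    calc (halfPlane a b c ∩ ↑P).ncard ≤ (↑P : Set (ℝ × ℝ)).ncard := by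
          apply Set.ncard_le_ncard Set.inter_subset_right (Finset.finite_toSet P)
      _ = P.card := by simp [Set.ncard_coe_finset]
      _ < 3 := by omega

end
end

section
/- Any finite family of half-planes can be colored with 3 colors such that every point of the plane contained in at least 2 of the half-planes is contained in two half-planes of different colors. -/
set_option maxHeartbeats 1000000


open Real

namespace Stmt11Aux

/-- 2x2 determinant of two planar vectors given by coordinates. -/
def det2 (v1 v2 w1 w2 : ℝ) : ℝ := v1 * w2 - v2 * w1

lemma F_pos {φ ψ : ℝ} (hφ : 0 < φ) (hψ : 0 < ψ) (hsum : φ + ψ < 2 * π) :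
    0 < Real.sin φ + Real.sin ψ - Real.sin (φ + ψ) := by
  have key : ∀ u v : ℝ, Real.sin (2*u) + Real.sin (2*v) - Real.sin (2*u + 2*v)
      = 4 * Real.sin u * Real.sin v * Real.sin (u+v) := by
    intro u v
    rw [show 2*u + 2*v = 2*(u+v) by ring, Real.sin_two_mul, Real.sin_two_mul,
      Real.sin_two_mul, Real.sin_add, Real.cos_add]
    have h1 : Real.sin u^2 + Real.cos u^2 = 1 := Real.sin_sq_add_cos_sq u
    have h2 : Real.sin v^2 + Real.cos v^2 = 1 := Real.sin_sq_add_cos_sq v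
    linear_combination (-2*Real.sin u*Real.cos u) * h2 + (-2*Real.sin v*Real.cos v) * h1
  have hid : Real.sin φ + Real.sin ψ - Real.sin (φ + ψ)
      = 4 * Real.sin (φ/2) * Real.sin (ψ/2) * Real.sin ((φ+ψ)/2) := by
    have h := key (φ/2) (ψ/2)
    rw [show 2*(φ/2) = φ by ring, show 2*(ψ/2) = ψ by ring] at h
    rw [show (φ+ψ)/2 = φ/2 + ψ/2 by ring]
    exact h
  rw [hid]
  have p1 : 0 < Real.sin (φ/2) := Real.sin_pos_of_pos_of_lt_pi (by linarith) (by linarith)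
  have p2 : 0 < Real.sin (ψ/2) := Real.sin_pos_of_pos_of_lt_pi (by linarith) (by linarith)
  have p3 : 0 < Real.sin ((φ+ψ)/2) := Real.sin_pos_of_pos_of_lt_pi (by linarith) (by linarith)
  positivity

/-- positively oriented triple of points on the unit circle -/
lemma sigma_pos {x y z : ℝ} (hxy : x < y) (hyz : y < z) (hx : -π < x) (hz : z ≤ π) :
    0 < det2 (Real.cos y - Real.cos x) (Real.sin y - Real.sin x)
        (Real.cos z - Real.cos x) (Real.sin z - Real.sin x) := by
  have hval : det2 (Real.cos y - Real.cos x) (Real.sin y - Real.sin x)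
        (Real.cos z - Real.cos x) (Real.sin z - Real.sin x)
      = Real.sin (y - x) + Real.sin (z - y) - Real.sin ((y - x) + (z - y)) := by
    have e : (y - x) + (z - y) = z - x := by ring
    rw [e]
    simp only [det2, Real.sin_sub, Real.cos_sub]
    ring
  rw [hval]
  exact F_pos (by linarith) (by linarith) (by linarith [Real.pi_pos])

lemma solve0 {v1 v2 w1 w2 u1 u2 : ℝ} (h1 : v1 * u2 - v2 * u1 = 0)
    (h2 : w1 * u2 - w2 * u1 = 0) (hd : v1 * w2 - v2 * w1 ≠ 0) : u1 = 0 ∧ u2 = 0 := by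
  constructor
  · have h3 : (v1 * w2 - v2 * w1) * u1 = 0 := by linear_combination w1 * h1 - v1 * h2
    rcases mul_eq_zero.mp h3 with h | h
    · exact absurd h hd
    · exact h
  · have h3 : (v1 * w2 - v2 * w1) * u2 = 0 := by linear_combination w2 * h1 - v2 * h2
    rcases mul_eq_zero.mp h3 with h | h
    · exact absurd h hd
    · exact h

/-- Crossing chords of the unit circle: four points in strictly increasing angular
order within `(-π, π]`; the chord 1-3 meets the chord 2-4 in the open interior of both. -/
lemma crossing {x y z w : ℝ} (hxy : x < y) (hyz : y < z) (hzw : z < w)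
    (hx : -π < x) (hw : w ≤ π) :
    ∃ lam mu nu rho : ℝ, 0 < lam ∧ 0 < mu ∧ 0 < nu ∧ 0 < rho ∧
      lam + mu = 1 ∧ nu + rho = 1 ∧
      lam * Real.cos x + mu * Real.cos z = nu * Real.cos y + rho * Real.cos w ∧
      lam * Real.sin x + mu * Real.sin z = nu * Real.sin y + rho * Real.sin w := by
  set A1 := Real.cos x; set A2 := Real.sin x
  set B1 := Real.cos y; set B2 := Real.sin y
  set C1 := Real.cos z; set C2 := Real.sin z
  set D1 := Real.cos w; set D2 := Real.sin w
  have hxπ : -π < x := hx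
  -- the four signed areas
  have sABC : 0 < det2 (B1 - A1) (B2 - A2) (C1 - A1) (C2 - A2) := sigma_pos hxy hyz hx (le_trans (le_of_lt hzw) hw)
  have sACD : 0 < det2 (C1 - A1) (C2 - A2) (D1 - A1) (D2 - A2) := sigma_pos (lt_trans hxy hyz) hzw hx hw
  have sABD : 0 < det2 (B1 - A1) (B2 - A2) (D1 - A1) (D2 - A2) := sigma_pos hxy (lt_trans hyz hzw) hx hw
  have sBCD : 0 < det2 (C1 - B1) (C2 - B2) (D1 - B1) (D2 - B2) := sigma_pos hyz hzw (by linarith) hw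
  -- f values for chord AC against B, D
  set f0 : ℝ := det2 (C1 - A1) (C2 - A2) (B1 - A1) (B2 - A2) with hf0
  set f1 : ℝ := det2 (C1 - A1) (C2 - A2) (D1 - A1) (D2 - A2) with hf1
  have hf0neg : f0 < 0 := by
    have : f0 = -det2 (B1 - A1) (B2 - A2) (C1 - A1) (C2 - A2) := by simp [hf0, det2]; ring
    rw [this]; linarith
  have hf1pos : 0 < f1 := sACD
  set g0 : ℝ := det2 (D1 - B1) (D2 - B2) (A1 - B1) (A2 - B2) with hg0
  set g1 : ℝ := det2 (D1 - B1) (D2 - B2) (C1 - B1) (C2 - B2) with hg1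
  have hg0pos : 0 < g0 := by
    have : g0 = det2 (B1 - A1) (B2 - A2) (D1 - A1) (D2 - A2) := by simp [hg0, det2]; ring
    rw [this]; exact sABD
  have hg1neg : g1 < 0 := by
    have : g1 = -det2 (C1 - B1) (C2 - B2) (D1 - B1) (D2 - B2) := by simp [hg1, det2]; ring
    rw [this]; linarith
  -- parameters along the chords
  set t : ℝ := f0 / (f0 - f1) with ht
  set s : ℝ := g0 / (g0 - g1) with hs
  have hden1 : f0 - f1 < 0 := by linarith
  have hden2 : 0 < g0 - g1 := by linarith
  have ht0 : 0 < t := by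
    rw [ht]; exact div_pos_of_neg_of_neg hf0neg hden1
  have ht1 : t < 1 := by
    rw [ht, div_lt_one_of_neg hden1]; linarith
  have hs0 : 0 < s := by rw [hs]; positivity
  have hs1 : s < 1 := by
    rw [hs, div_lt_one hden2]; linarith
  -- X = B + t (D - B), Y = A + s (C - A)
  set X1 : ℝ := B1 + t * (D1 - B1) with hX1
  set X2 : ℝ := B2 + t * (D2 - B2) with hX2
  set Y1 : ℝ := A1 + s * (C1 - A1) with hY1
  set Y2 : ℝ := A2 + s * (C2 - A2) with hY2
  -- X lies on line AC
  have hXAC : det2 (C1 - A1) (C2 - A2) (X1 - A1) (X2 - A2) = 0 := by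
    have : det2 (C1 - A1) (C2 - A2) (X1 - A1) (X2 - A2) = f0 + t * (f1 - f0) := by
      simp [det2, hX1, hX2, hf0, hf1]; ring
    rw [this, ht]
    have hne : f0 - f1 ≠ 0 := ne_of_lt hden1
    field_simp
    ring
  have hYBD : det2 (D1 - B1) (D2 - B2) (Y1 - B1) (Y2 - B2) = 0 := by
    have : det2 (D1 - B1) (D2 - B2) (Y1 - B1) (Y2 - B2) = g0 + s * (g1 - g0) := by
      simp [det2, hY1, hY2, hg0, hg1]; ring
    rw [this, hs]
    have hne : g0 - g1 ≠ 0 := ne_of_gt hden2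
    field_simp
    ring
  have hXBD : det2 (D1 - B1) (D2 - B2) (X1 - B1) (X2 - B2) = 0 := by
    simp [det2, hX1, hX2]; ring
  have hYAC : det2 (C1 - A1) (C2 - A2) (Y1 - A1) (Y2 - A2) = 0 := by
    simp [det2, hY1, hY2]; ring
  -- the two lines are not parallel
  have hnp : det2 (C1 - A1) (C2 - A2) (D1 - B1) (D2 - B2) ≠ 0 := by
    have : det2 (C1 - A1) (C2 - A2) (D1 - B1) (D2 - B2) = f1 - f0 := by
      simp [det2, hf0, hf1]; ring
    rw [this]; linarith
  -- X = Y
  have hXY : X1 = Y1 ∧ X2 = Y2 := by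
    have h1 : (C1 - A1) * (X2 - Y2) - (C2 - A2) * (X1 - Y1) = 0 := by
      have := hXAC; have := hYAC
      simp only [det2] at *; linarith
    have h2 : (D1 - B1) * (X2 - Y2) - (D2 - B2) * (X1 - Y1) = 0 := by
      simp only [det2] at hXBD hYBD; linarith
    have hd : (C1 - A1) * (D2 - B2) - (C2 - A2) * (D1 - B1) ≠ 0 := by
      simpa [det2] using hnp
    have := solve0 h1 h2 hd
    constructor <;> [skip; skip]
    · linarith [this.1]
    · linarith [this.2]
  refine ⟨1 - s, s, 1 - t, t, by linarith, hs0, by linarith, ht0, by ring, by ring, ?_, ?_⟩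
  · have := hXY.1; simp only [hX1, hY1] at this; linarith
  · have := hXY.2; simp only [hX2, hY2] at this; linarith

end Stmt11Aux


namespace Stmt11Aux
open Finset

lemma pair_perm : ∀ x1 y1 x2 y2 : Fin 3, x1 ≠ y1 → x2 ≠ y2 →
    ∃ g : Fin 3 → Fin 3, Function.Injective g ∧ g x2 = x1 ∧ g y2 = y1 := by decide

lemma chord3color {α β : Type*} [DecidableEq α] [LinearOrder β]
    (R : α → α → Prop) (key : α → β)
    (hsym : ∀ i j, R i j → R j i)
    (hne : ∀ i j, R i j → i ≠ j)
    (hnc : ∀ a b c d, R a c → R b d → key a < key b → key b < key c → key c < key d → False) :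
    ∀ s : Finset α, Set.InjOn key ↑s →
      ∃ f : α → Fin 3, ∀ i ∈ s, ∀ j ∈ s, R i j → f i ≠ f j := by
  classical
  intro s
  induction s using Finset.strongInduction with
  | _ s ih =>
  intro hinj
  by_cases hsplit : ∃ a ∈ s, ∃ b ∈ s, R a b ∧ key a < key b ∧
      (∃ x ∈ s, key a < key x ∧ key x < key b) ∧ (∃ y ∈ s, key y < key a ∨ key b < key y)
  · obtain ⟨a, ha, b, hb, hab, hkab, ⟨x, hx, hxa, hxb⟩, ⟨y, hy, hyout⟩⟩ := hsplit
    set s1 := s.filter (fun i => key a ≤ key i ∧ key i ≤ key b) with hs1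
    set s2 := s.filter (fun i => key i ≤ key a ∨ key b ≤ key i) with hs2
    have ha1 : a ∈ s1 := by simp [hs1, ha, le_of_lt hkab]
    have hb1 : b ∈ s1 := by simp [hs1, hb, le_of_lt hkab]
    have ha2 : a ∈ s2 := by simp [hs2, ha]
    have hb2 : b ∈ s2 := by simp [hs2, hb]
    have hynotin : y ∉ s1 := by
      rw [hs1, mem_filter]
      rintro ⟨-, h1, h2⟩
      rcases hyout with h | h
      · exact absurd h1 (not_le.2 h)
      · exact absurd h2 (not_le.2 h)
    have hxnotin : x ∉ s2 := by
      rw [hs2, mem_filter]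
      rintro ⟨-, h | h⟩
      · exact absurd hxa (not_lt.2 h)
      · exact absurd hxb (not_lt.2 h)
    have hsub1 : s1 ⊂ s := (Finset.ssubset_iff_of_subset (filter_subset _ s)).2 ⟨y, hy, hynotin⟩
    have hsub2 : s2 ⊂ s := (Finset.ssubset_iff_of_subset (filter_subset _ s)).2 ⟨x, hx, hxnotin⟩
    obtain ⟨f1, hf1⟩ := ih s1 hsub1 (hinj.mono (by exact_mod_cast filter_subset _ s))
    obtain ⟨f2, hf2⟩ := ih s2 hsub2 (hinj.mono (by exact_mod_cast filter_subset _ s))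
    have hab1 : f1 a ≠ f1 b := hf1 a ha1 b hb1 hab
    have hab2 : f2 a ≠ f2 b := hf2 a ha2 b hb2 hab
    obtain ⟨perm, hpinj, hpa, hpb⟩ := pair_perm (f1 a) (f1 b) (f2 a) (f2 b) hab1 hab2
    refine ⟨fun i => if i ∈ s1 then f1 i else perm (f2 i), ?_⟩
    have hcap : ∀ i ∈ s1, i ∈ s2 → i = a ∨ i = b := by
      intro i hi1 hi2
      rw [hs1, mem_filter] at hi1
      rw [hs2, mem_filter] at hi2
      rcases hi2.2 with h | h
      · exact Or.inl (hinj hi1.1 ha (le_antisymm h hi1.2.1))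
      · exact Or.inr (hinj hi1.1 hb (le_antisymm hi1.2.2 h))
    -- on s2, the coloring agrees with π ∘ f2
    have hs2val : ∀ i ∈ s2, (if i ∈ s1 then f1 i else perm (f2 i)) = perm (f2 i) := by
      intro i hi2
      by_cases hi1 : i ∈ s1
      · rcases hcap i hi1 hi2 with rfl | rfl
        · simp [hi1, hpa]
        · simp [hi1, hpb]
      · simp [hi1]
    -- classification of edges
    have hclass : ∀ i ∈ s, ∀ j ∈ s, R i j → (i ∈ s1 ∧ j ∈ s1) ∨ (i ∈ s2 ∧ j ∈ s2) := by
      intro i hi j hj hR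
      -- a strictly-inside endpoint plus a strictly-outside endpoint is impossible
      have contra : ∀ u ∈ s, ∀ v ∈ s, R u v → key a < key u → key u < key b →
          (key v < key a ∨ key b < key v) → False := by
        intro u hu v hv hRuv h1 h2 hout
        rcases hout with h | h
        · exact hnc v a u b (hsym u v hRuv) hab h h1 h2
        · exact hnc a u b v hab hRuv h1 h2 h
      by_cases hi1 : i ∈ s1
      · by_cases hj1 : j ∈ s1
        · exact Or.inl ⟨hi1, hj1⟩
        · -- j strictly outside
          rw [hs1, mem_filter] at hj1
          have hjout : key j < key a ∨ key b < key j := by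
            rcases not_and_or.mp (fun hc => hj1 ⟨hj, hc⟩) with h | h
            · exact Or.inl (not_le.1 h)
            · exact Or.inr (not_le.1 h)
          have hj2 : j ∈ s2 := by
            rw [hs2, mem_filter]
            rcases hjout with h | h
            · exact ⟨hj, Or.inl (le_of_lt h)⟩
            · exact ⟨hj, Or.inr (le_of_lt h)⟩
          -- i must be a or b, else contradiction
          rw [hs1, mem_filter] at hi1
          rcases lt_or_eq_of_le hi1.2.1 with h1 | h1
          · rcases lt_or_eq_of_le hi1.2.2 with h2 | h2
            · exact (contra i hi j hj hR h1 h2 hjout).elim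
            · have : i = b := hinj hi hb h2
              subst this
              refine Or.inr ⟨?_, hj2⟩
              rw [hs2, mem_filter]
              exact ⟨hi, Or.inr le_rfl⟩
          · have : i = a := hinj hi ha h1.symm
            subst this
            exact Or.inr ⟨ha2, hj2⟩
      · -- i strictly outside
        rw [hs1, mem_filter] at hi1
        have hiout : key i < key a ∨ key b < key i := by
          rcases not_and_or.mp (fun hc => hi1 ⟨hi, hc⟩) with h | h
          · exact Or.inl (not_le.1 h)
          · exact Or.inr (not_le.1 h)
        have hi2 : i ∈ s2 := by
          rw [hs2, mem_filter]
          rcases hiout with h | h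
          · exact ⟨hi, Or.inl (le_of_lt h)⟩
          · exact ⟨hi, Or.inr (le_of_lt h)⟩
        by_cases hj1 : j ∈ s1
        · rw [hs1, mem_filter] at hj1
          rcases lt_or_eq_of_le hj1.2.1 with h1 | h1
          · rcases lt_or_eq_of_le hj1.2.2 with h2 | h2
            · exact (contra j hj i hi (hsym i j hR) h1 h2 hiout).elim
            · have : j = b := hinj hj hb h2
              subst this
              exact Or.inr ⟨hi2, hb2⟩
          · have : j = a := hinj hj ha h1.symm
            subst this
            exact Or.inr ⟨hi2, ha2⟩
        · rw [hs1, mem_filter] at hj1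
          have hjout : key j < key a ∨ key b < key j := by
            rcases not_and_or.mp (fun hc => hj1 ⟨hj, hc⟩) with h | h
            · exact Or.inl (not_le.1 h)
            · exact Or.inr (not_le.1 h)
          have hj2 : j ∈ s2 := by
            rw [hs2, mem_filter]
            rcases hjout with h | h
            · exact ⟨hj, Or.inl (le_of_lt h)⟩
            · exact ⟨hj, Or.inr (le_of_lt h)⟩
          exact Or.inr ⟨hi2, hj2⟩
    intro i hi j hj hR
    rcases hclass i hi j hj hR with ⟨hi1, hj1⟩ | ⟨hi2, hj2⟩
    · simpa [hi1, hj1] using hf1 i hi1 j hj1 hR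
    · show (if i ∈ s1 then f1 i else perm (f2 i)) ≠ (if j ∈ s1 then f1 j else perm (f2 j))
      rw [hs2val i hi2, hs2val j hj2]
      exact fun h => hf2 i hi2 j hj2 hR (hpinj h)
  · -- no splitting edge: path/cycle-like coloring by rank
    push_neg at hsplit
    set m := s.card with hm
    set rnk : α → ℕ := fun i => (s.filter (fun j => key j < key i)).card with hrnk
    refine ⟨fun i => if rnk i = m - 1 then (2 : Fin 3) else ⟨rnk i % 2, by omega⟩, ?_⟩
    have hrle : ∀ i ∈ s, rnk i ≤ m - 1 := by
      intro i hi
      have hsub : s.filter (fun j => key j < key i) ⊆ s.erase i := by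
        intro j hj
        rw [mem_filter] at hj
        exact mem_erase.2 ⟨fun h => absurd hj.2 (by rw [h]; exact lt_irrefl _), hj.1⟩
      calc rnk i ≤ (s.erase i).card := card_le_card hsub
        _ = m - 1 := by rw [card_erase_of_mem hi]
    have hmono : ∀ i ∈ s, ∀ j ∈ s, key i < key j → rnk i < rnk j := by
      intro i hi j hj hk
      apply card_lt_card
      constructor
      · intro u hu
        rw [mem_filter] at hu ⊢
        exact ⟨hu.1, lt_trans hu.2 hk⟩
      · intro hcon
        have : i ∈ s.filter (fun j' => key j' < key i) := hcon (by rw [mem_filter]; exact ⟨hi, hk⟩)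
        rw [mem_filter] at this
        exact absurd this.2 (lt_irrefl _)
    -- main inequality for ordered edges
    have main : ∀ i ∈ s, ∀ j ∈ s, R i j → key i < key j →
        (if rnk i = m - 1 then (2 : Fin 3) else ⟨rnk i % 2, by omega⟩)
        ≠ (if rnk j = m - 1 then (2 : Fin 3) else ⟨rnk j % 2, by omega⟩) := by
      intro i hi j hj hR hk
      have hm2 : 2 ≤ m := by
        have : ({i, j} : Finset α) ⊆ s := by
          intro u hu
          rcases mem_insert.1 hu with rfl | hu
          · exact hi
          · rw [mem_singleton.1 hu]; exact hj
        calc 2 = ({i, j} : Finset α).card := by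
              rw [card_insert_of_notMem (by simpa using hne i j hR), card_singleton]
          _ ≤ m := card_le_card this
      by_cases hin : ∃ x ∈ s, key i < key x ∧ key x < key j
      case pos =>
        -- there is an inside point, hence no outside point: i is min, j is max
        have hno_out := hsplit i hi j hj hR hk hin
        have hri : rnk i = 0 := by
          simp only [hrnk]
          rw [Finset.card_eq_zero, Finset.filter_eq_empty_iff]
          intro u hu
          exact not_lt.2 (hno_out u hu).1
        have hrj : rnk j = m - 1 := by
          have heq : s.filter (fun u => key u < key j) = s.erase j := by
            ext u
            rw [mem_filter, mem_erase]
            constructor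
            · rintro ⟨hu, huk⟩
              exact ⟨fun h => absurd huk (by rw [h]; exact lt_irrefl _), hu⟩
            · rintro ⟨hne', hu⟩
              rcases lt_or_eq_of_le (hno_out u hu).2 with h | h
              · exact ⟨hu, h⟩
              · exact absurd (hinj hu hj h) hne'
          simp only [hrnk]
          rw [heq, card_erase_of_mem hj]
        have hitop : ¬ (rnk i = m - 1) := by omega
        rw [if_neg hitop, if_pos hrj]
        intro h
        have h2 := congrArg Fin.val h
        simp [hri] at h2
      case neg =>
        -- no inside point: consecutive ranks
        push_neg at hin
        have hno_in := hin
        have hcons : rnk j = rnk i + 1 := by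
          have : s.filter (fun u => key u < key j) = insert i (s.filter (fun u => key u < key i)) := by
            ext u
            rw [mem_insert, mem_filter, mem_filter]
            constructor
            · rintro ⟨hu, hukj⟩
              have := hno_in u hu
              rcases lt_or_ge (key i) (key u) with h | h
              · exact absurd hukj (not_lt.2 (this h))
              · rcases lt_or_eq_of_le h with h | h
                · exact Or.inr ⟨hu, h⟩
                · exact Or.inl (hinj hu hi h)
            · rintro (rfl | ⟨hu, huk⟩)
              · exact ⟨hi, hk⟩
              · exact ⟨hu, lt_trans huk hk⟩
          simp only [hrnk]
          rw [this, card_insert_of_notMem]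
          rw [mem_filter]
          exact fun h => absurd h.2 (lt_irrefl _)
        by_cases hjtop : rnk j = m - 1
        · have hitop : ¬ (rnk i = m - 1) := by omega
          rw [if_neg hitop, if_pos hjtop]
          intro h
          have h2 := congrArg Fin.val h
          simp at h2
          omega
        · have hitop : ¬ (rnk i = m - 1) := by
            have h3 := hrle j hj
            omega
          rw [if_neg hitop, if_neg hjtop]
          intro h
          have h2 := congrArg Fin.val h
          simp at h2
          omega
    intro i hi j hj hR
    have hkne : key i ≠ key j := fun h => hne i j hR (hinj hi hj h)
    rcases lt_or_gt_of_ne hkne with h | h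
    · exact main i hi j hj hR h
    · exact (main j hj i hi (hsym i j hR) h).symm

end Stmt11Aux


namespace Stmt11Aux
open Real

variable {n : ℕ}

/-- normalized signed distance of `p` to the boundary of half-plane `i` -/
noncomputable def gfun (θ c' : Fin n → ℝ) (i : Fin n) (p : ℝ × ℝ) : ℝ :=
  c' i - (Real.cos (θ i) * p.1 + Real.sin (θ i) * p.2)

/-- strict "lexicographic depth" comparison at a point -/
def beats (θ c' : Fin n → ℝ) (p : ℝ × ℝ) (i j : Fin n) : Prop :=
  gfun θ c' j p < gfun θ c' i p ∨ (gfun θ c' i p = gfun θ c' j p ∧ i < j)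

noncomputable def keyf (θ c' : Fin n → ℝ) (i : Fin n) : ℝ ×ₗ (ℝ ×ₗ ℕ) :=
  toLex (θ i, toLex (-c' i, (i : ℕ)))

/-- conflict relation: `i` and `j` are the two deepest half-planes at some point -/
def Rel (θ c' : Fin n → ℝ) (i j : Fin n) : Prop :=
  i ≠ j ∧ ∃ p : ℝ × ℝ, ∀ k : Fin n, k ≠ i → k ≠ j →
    beats θ c' p i k ∧ beats θ c' p j k

lemma beats_asymm {θ c' : Fin n → ℝ} {p : ℝ × ℝ} {i j : Fin n}
    (h1 : beats θ c' p i j) (h2 : beats θ c' p j i) : False := by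
  rcases h1 with h1 | ⟨h1, h1'⟩ <;> rcases h2 with h2 | ⟨h2, h2'⟩
  · exact lt_asymm h1 h2
  · linarith
  · linarith
  · exact lt_asymm h1' h2'

lemma beats_le {θ c' : Fin n → ℝ} {p : ℝ × ℝ} {i j : Fin n}
    (h : beats θ c' p i j) : gfun θ c' j p ≤ gfun θ c' i p := by
  rcases h with h | ⟨h, -⟩
  · exact le_of_lt h
  · exact le_of_eq h.symm

lemma keyf_lt_iff {θ c' : Fin n → ℝ} {i j : Fin n} :
    keyf θ c' i < keyf θ c' j ↔
      θ i < θ j ∨ (θ i = θ j ∧ (-c' i < -c' j ∨ (-c' i = -c' j ∧ (i : ℕ) < (j : ℕ)))) := by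
  unfold keyf
  rw [Prod.Lex.lt_iff]
  constructor
  · rintro (h | ⟨h, h2⟩)
    · exact Or.inl h
    · rw [Prod.Lex.lt_iff] at h2
      exact Or.inr ⟨h, h2⟩
  · rintro (h | ⟨h, h2⟩)
    · exact Or.inl h
    · exact Or.inr ⟨h, Prod.Lex.lt_iff.2 h2⟩

lemma keyf_theta_le {θ c' : Fin n → ℝ} {i j : Fin n} (h : keyf θ c' i < keyf θ c' j) :
    θ i ≤ θ j := by
  rcases keyf_lt_iff.1 h with h | ⟨h, -⟩
  · exact le_of_lt h
  · exact le_of_eq h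

lemma keyf_ne {θ c' : Fin n → ℝ} {i j : Fin n} (h : keyf θ c' i < keyf θ c' j) : i ≠ j :=
  fun he => absurd (he ▸ h) (lt_irrefl _)

/-- two half-planes with the same normal direction are comparable everywhere -/
lemma beats_everywhere {θ c' : Fin n → ℝ} {i j : Fin n} (hθ : θ i = θ j)
    (hk : keyf θ c' i < keyf θ c' j) : ∀ p : ℝ × ℝ, beats θ c' p i j := by
  intro p
  have hdiff : gfun θ c' i p - gfun θ c' j p = c' i - c' j := by
    simp only [gfun, hθ]; ring
  rcases keyf_lt_iff.1 hk with h | ⟨-, h | ⟨h, hij⟩⟩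
  · exact absurd hθ (ne_of_lt h)
  · have : c' j < c' i := by linarith [neg_lt_neg_iff.1 h]
    exact Or.inl (by linarith)
  · have hcc : c' i = c' j := neg_inj.1 h
    refine Or.inr ⟨by linarith, Fin.lt_def.2 hij⟩

lemma no_cross {θ c' : Fin n → ℝ} (hθIoc : ∀ i, θ i ∈ Set.Ioc (-π) π) :
    ∀ a b c d, Rel θ c' a c → Rel θ c' b d →
      keyf θ c' a < keyf θ c' b → keyf θ c' b < keyf θ c' c →
      keyf θ c' c < keyf θ c' d → False := by
  intro a b c d hac hbd kab kbc kcd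
  obtain ⟨hacne, p, hp⟩ := hac
  obtain ⟨hbdne, q, hq⟩ := hbd
  have kac := lt_trans kab kbc
  have kad := lt_trans kac kcd
  have kbd := lt_trans kbc kcd
  have nab : a ≠ b := keyf_ne kab
  have nbc : b ≠ c := keyf_ne kbc
  have ncd : c ≠ d := keyf_ne kcd
  have nad : a ≠ d := keyf_ne kad
  have hpb := hp b nab.symm nbc
  have hpd := hp d nad.symm ncd.symm
  have hqa := hq a nab nad
  have hqc := hq c nbc.symm ncd
  by_cases tab : θ a = θ b
  · exact beats_asymm (beats_everywhere tab kab q) hqa.1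
  by_cases tbc : θ b = θ c
  · exact beats_asymm (beats_everywhere tbc kbc p) hpb.2
  by_cases tcd : θ c = θ d
  · exact beats_asymm (beats_everywhere tcd kcd q) hqc.2
  have sab : θ a < θ b := lt_of_le_of_ne (keyf_theta_le kab) tab
  have sbc : θ b < θ c := lt_of_le_of_ne (keyf_theta_le kbc) tbc
  have scd : θ c < θ d := lt_of_le_of_ne (keyf_theta_le kcd) tcd
  obtain ⟨lam, mu, nu, rho, hlam, hmu, hnu, hrho, hlm, hnr, eqcos, eqsin⟩ :=
    crossing sab sbc scd (hθIoc a).1 (hθIoc d).2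
  set C : ℝ := lam * c' a + mu * c' c - nu * c' b - rho * c' d with hC
  have hconst : ∀ r : ℝ × ℝ,
      lam * gfun θ c' a r + mu * gfun θ c' c r - nu * gfun θ c' b r - rho * gfun θ c' d r = C := by
    intro r
    simp only [gfun, hC]
    linear_combination (-r.1) * eqcos + (-r.2) * eqsin
  have pb_a : gfun θ c' b p ≤ gfun θ c' a p := beats_le hpb.1
  have pb_c : gfun θ c' b p ≤ gfun θ c' c p := beats_le hpb.2
  have pd_a : gfun θ c' d p ≤ gfun θ c' a p := beats_le hpd.1
  have pd_c : gfun θ c' d p ≤ gfun θ c' c p := beats_le hpd.2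
  have qa_b : gfun θ c' a q ≤ gfun θ c' b q := beats_le hqa.1
  have qa_d : gfun θ c' a q ≤ gfun θ c' d q := beats_le hqa.2
  have qc_b : gfun θ c' c q ≤ gfun θ c' b q := beats_le hqc.1
  have qc_d : gfun θ c' c q ≤ gfun θ c' d q := beats_le hqc.2
  set GAp := gfun θ c' a p with hGAp
  set GBp := gfun θ c' b p with hGBp
  set GCp := gfun θ c' c p with hGCp
  set GDp := gfun θ c' d p with hGDp
  set GAq := gfun θ c' a q with hGAq
  set GBq := gfun θ c' b q with hGBq
  set GCq := gfun θ c' c q with hGCq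
  set GDq := gfun θ c' d q with hGDq
  have hcp := hconst p
  have hcq := hconst q
  have eBp : lam * GBp + mu * GBp = GBp := by linear_combination GBp * hlm
  have b_le : GBp ≤ lam * GAp + mu * GCp := by
    linarith only [mul_nonneg hlam.le (sub_nonneg.2 pb_a), mul_nonneg hmu.le (sub_nonneg.2 pb_c), eBp]
  have eDp : lam * GDp + mu * GDp = GDp := by linear_combination GDp * hlm
  have d_le : GDp ≤ lam * GAp + mu * GCp := by
    linarith only [mul_nonneg hlam.le (sub_nonneg.2 pd_a), mul_nonneg hmu.le (sub_nonneg.2 pd_c), eDp]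
  have hMp : nu * (lam * GAp + mu * GCp) + rho * (lam * GAp + mu * GCp)
      = lam * GAp + mu * GCp := by
    linear_combination (lam * GAp + mu * GCp) * hnr
  have hC0 : 0 ≤ C := by
    linarith only [mul_le_mul_of_nonneg_left b_le hnu.le, mul_le_mul_of_nonneg_left d_le hrho.le,
      hcp, hMp]
  have eAq : nu * GAq + rho * GAq = GAq := by linear_combination GAq * hnr
  have a_le : GAq ≤ nu * GBq + rho * GDq := by
    linarith only [mul_nonneg hnu.le (sub_nonneg.2 qa_b), mul_nonneg hrho.le (sub_nonneg.2 qa_d), eAq]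
  have eCq : nu * GCq + rho * GCq = GCq := by linear_combination GCq * hnr
  have c_le : GCq ≤ nu * GBq + rho * GDq := by
    linarith only [mul_nonneg hnu.le (sub_nonneg.2 qc_b), mul_nonneg hrho.le (sub_nonneg.2 qc_d), eCq]
  have hMq : lam * (nu * GBq + rho * GDq) + mu * (nu * GBq + rho * GDq)
      = nu * GBq + rho * GDq := by
    linear_combination (nu * GBq + rho * GDq) * hlm
  have hC1 : C ≤ 0 := by
    linarith only [mul_le_mul_of_nonneg_left a_le hlam.le, mul_le_mul_of_nonneg_left c_le hmu.le,
      hcq, hMq]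
  have hCeq : C = 0 := le_antisymm hC1 hC0
  -- equality analysis at p: GAp = GBp
  have h0p : nu * ((lam * GAp + mu * GCp) - GBp) + rho * ((lam * GAp + mu * GCp) - GDp) = 0 := by
    linear_combination hcp + hCeq + (lam * GAp + mu * GCp) * hnr
  have hb0 : nu * ((lam * GAp + mu * GCp) - GBp) = 0 := by
    linarith only [mul_nonneg hnu.le (sub_nonneg.2 b_le), mul_nonneg hrho.le (sub_nonneg.2 d_le), h0p]
  have hBpM : GBp = lam * GAp + mu * GCp := by
    rcases mul_eq_zero.1 hb0 with h | h
    · exact absurd h (ne_of_gt hnu)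
    · linarith
  have h1p : lam * (GAp - GBp) + mu * (GCp - GBp) = 0 := by
    linear_combination -hBpM - GBp * hlm
  have hABp : GAp = GBp := by
    have hl0 : lam * (GAp - GBp) = 0 := by
      linarith only [mul_nonneg hlam.le (sub_nonneg.2 pb_a), mul_nonneg hmu.le (sub_nonneg.2 pb_c), h1p]
    rcases mul_eq_zero.1 hl0 with h | h
    · exact absurd h (ne_of_gt hlam)
    · linarith
  -- equality analysis at q: GAq = GBq
  have h0q : lam * ((nu * GBq + rho * GDq) - GAq) + mu * ((nu * GBq + rho * GDq) - GCq) = 0 := by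
    linear_combination -hcq - hCeq + (nu * GBq + rho * GDq) * hlm
  have ha0 : lam * ((nu * GBq + rho * GDq) - GAq) = 0 := by
    linarith only [mul_nonneg hlam.le (sub_nonneg.2 a_le), mul_nonneg hmu.le (sub_nonneg.2 c_le), h0q]
  have hAqM : GAq = nu * GBq + rho * GDq := by
    rcases mul_eq_zero.1 ha0 with h | h
    · exact absurd h (ne_of_gt hlam)
    · linarith
  have h1q : nu * (GBq - GAq) + rho * (GDq - GAq) = 0 := by
    linear_combination -hAqM - GAq * hnr
  have hABq : GBq = GAq := by
    have hn0 : nu * (GBq - GAq) = 0 := by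
      linarith only [mul_nonneg hnu.le (sub_nonneg.2 qa_b), mul_nonneg hrho.le (sub_nonneg.2 qa_d), h1q]
    rcases mul_eq_zero.1 hn0 with h | h
    · exact absurd h (ne_of_gt hnu)
    · linarith
  -- finish: index tie-break contradiction
  have hidx1 : a < b := by
    rcases hpb.1 with h | ⟨-, h⟩
    · rw [← hGAp, ← hGBp, hABp] at h
      exact absurd h (lt_irrefl _)
    · exact h
  have hidx2 : b < a := by
    rcases hqa.1 with h | ⟨-, h⟩
    · rw [← hGAq, ← hGBq, hABq] at h
      exact absurd h (lt_irrefl _)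
    · exact h
  exact lt_asymm hidx1 hidx2

end Stmt11Aux

theorem stmt11 (n : ℕ) (H : Fin n → ℝ × ℝ × ℝ)
    (hH : ∀ i, ((H i).1, (H i).2.1) ≠ ((0 : ℝ), (0 : ℝ))) :
    ∃ f : Fin n → Fin 3, ∀ p : ℝ × ℝ,
      2 ≤ {i : Fin n | p ∈ halfPlane (H i).1 (H i).2.1 (H i).2.2}.ncard →
      ∃ i j : Fin n, p ∈ halfPlane (H i).1 (H i).2.1 (H i).2.2 ∧
        p ∈ halfPlane (H j).1 (H j).2.1 (H j).2.2 ∧ f i ≠ f j := by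
  classical
  have hz : ∀ i, (⟨(H i).1, (H i).2.1⟩ : ℂ) ≠ 0 := by
    intro i h
    apply hH i
    rw [Complex.ext_iff] at h
    simp only [Complex.zero_re, Complex.zero_im] at h
    exact Prod.ext h.1 h.2
  set R : Fin n → ℝ := fun i => ‖(⟨(H i).1, (H i).2.1⟩ : ℂ)‖ with hRdef
  have hR : ∀ i, 0 < R i := fun i => norm_pos_iff.mpr (hz i)
  set θ : Fin n → ℝ := fun i => Complex.arg (⟨(H i).1, (H i).2.1⟩ : ℂ) with hθdef
  set c' : Fin n → ℝ := fun i => (H i).2.2 / R i with hcdef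
  have hθIoc : ∀ i, θ i ∈ Set.Ioc (-Real.pi) Real.pi := fun i => Complex.arg_mem_Ioc _
  have hcos : ∀ i, Real.cos (θ i) = (H i).1 / R i := fun i => Complex.cos_arg (hz i)
  have hsin : ∀ i, Real.sin (θ i) = (H i).2.1 / R i := fun i => Complex.sin_arg _
  have hmem : ∀ i p, p ∈ halfPlane (H i).1 (H i).2.1 (H i).2.2 ↔ 0 ≤ Stmt11Aux.gfun θ c' i p := by
    intro i p
    have hgi : Stmt11Aux.gfun θ c' i p
        = ((H i).2.2 - ((H i).1 * p.1 + (H i).2.1 * p.2)) / R i := by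
      simp only [Stmt11Aux.gfun, hcos, hsin, hcdef]
      ring
    have hhp : p ∈ halfPlane (H i).1 (H i).2.1 (H i).2.2
        ↔ (H i).1 * p.1 + (H i).2.1 * p.2 ≤ (H i).2.2 := Iff.rfl
    rw [hhp, hgi, le_div_iff₀ (hR i), zero_mul, sub_nonneg]
  have hkeyinj : Set.InjOn (Stmt11Aux.keyf θ c') (↑(Finset.univ : Finset (Fin n))) := by
    intro i _ j _ h
    unfold Stmt11Aux.keyf at h
    have h1 := congrArg (fun x => (ofLex x).2) h
    simp only [ofLex_toLex] at h1
    have h2 := congrArg (fun x => (ofLex x).2) h1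
    simp only [ofLex_toLex] at h2
    exact Fin.ext h2
  obtain ⟨f, hf⟩ := Stmt11Aux.chord3color (Stmt11Aux.Rel θ c') (Stmt11Aux.keyf θ c')
      (fun i j hij => ⟨hij.1.symm, hij.2.choose,
        fun k h1 h2 => ⟨(hij.2.choose_spec k h2 h1).2, (hij.2.choose_spec k h2 h1).1⟩⟩)
      (fun i j h => h.1)
      (Stmt11Aux.no_cross hθIoc)
      Finset.univ hkeyinj
  refine ⟨f, ?_⟩
  intro p hp2
  have hfin : {i : Fin n | p ∈ halfPlane (H i).1 (H i).2.1 (H i).2.2}.Finite := Set.toFinite _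
  obtain ⟨x, y, hx, hy, hxy⟩ := (Set.one_lt_ncard_iff hfin).1 (lt_of_lt_of_le one_lt_two hp2)
  set w : Fin n → ℝ ×ₗ (Fin n)ᵒᵈ :=
    fun i => toLex (Stmt11Aux.gfun θ c' i p, OrderDual.toDual i) with hwdef
  have hwinj : ∀ {i j : Fin n}, w i = w j → i = j := by
    intro i j h
    simp only [hwdef] at h
    have h1 := congrArg (fun x => (ofLex x).2) h
    simp only [ofLex_toLex] at h1
    exact OrderDual.toDual_inj.1 h1
  have hbeats_iff : ∀ i j : Fin n, w j < w i ↔ Stmt11Aux.beats θ c' p i j := by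
    intro i j
    simp only [hwdef]
    rw [Prod.Lex.lt_iff]
    unfold Stmt11Aux.beats
    constructor
    · rintro (h | ⟨h, h2⟩)
      · exact Or.inl h
      · exact Or.inr ⟨h.symm, OrderDual.toDual_lt_toDual.1 h2⟩
    · rintro (h | ⟨h, h2⟩)
      · exact Or.inl h
      · exact Or.inr ⟨h.symm, OrderDual.toDual_lt_toDual.2 h2⟩
  have hwfst : ∀ i j : Fin n, w i ≤ w j → Stmt11Aux.gfun θ c' i p ≤ Stmt11Aux.gfun θ c' j p := by
    intro i j h
    simp only [hwdef] at h
    rcases Prod.Lex.le_iff.1 h with h | ⟨h, -⟩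
    · exact le_of_lt h
    · exact le_of_eq h
  obtain ⟨i0, -, hi0⟩ := Finset.exists_max_image Finset.univ w ⟨x, Finset.mem_univ x⟩
  have hne0 : (Finset.univ.erase i0).Nonempty := by
    rcases eq_or_ne x i0 with rfl | hxne
    · exact ⟨y, Finset.mem_erase.2 ⟨hxy.symm, Finset.mem_univ y⟩⟩
    · exact ⟨x, Finset.mem_erase.2 ⟨hxne, Finset.mem_univ x⟩⟩
  obtain ⟨j0, hj0mem, hj0⟩ := Finset.exists_max_image _ w hne0
  have hj0ne : j0 ≠ i0 := (Finset.mem_erase.1 hj0mem).1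
  have hRel : Stmt11Aux.Rel θ c' i0 j0 := by
    refine ⟨hj0ne.symm, p, fun k hk1 hk2 => ⟨?_, ?_⟩⟩
    · exact (hbeats_iff i0 k).1
        (lt_of_le_of_ne (hi0 k (Finset.mem_univ k)) (fun h => hk1 (hwinj h)))
    · have hkmem : k ∈ Finset.univ.erase i0 := Finset.mem_erase.2 ⟨hk1, Finset.mem_univ k⟩
      exact (hbeats_iff j0 k).1
        (lt_of_le_of_ne (hj0 k hkmem) (fun h => hk2 (hwinj h)))
  have hgx : 0 ≤ Stmt11Aux.gfun θ c' x p := (hmem x p).1 hx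
  have hgy : 0 ≤ Stmt11Aux.gfun θ c' y p := (hmem y p).1 hy
  have hgi0 : 0 ≤ Stmt11Aux.gfun θ c' i0 p :=
    le_trans hgx (hwfst x i0 (hi0 x (Finset.mem_univ x)))
  have hgj0 : 0 ≤ Stmt11Aux.gfun θ c' j0 p := by
    rcases eq_or_ne x i0 with rfl | hxne
    · have hymem : y ∈ Finset.univ.erase x := Finset.mem_erase.2 ⟨hxy.symm, Finset.mem_univ y⟩
      exact le_trans hgy (hwfst y j0 (hj0 y hymem))
    · have hxmem : x ∈ Finset.univ.erase i0 := Finset.mem_erase.2 ⟨hxne, Finset.mem_univ x⟩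
      exact le_trans hgx (hwfst x j0 (hj0 x hxmem))
  exact ⟨i0, j0, (hmem i0 p).2 hgi0, (hmem j0 p).2 hgj0,
    hf i0 (Finset.mem_univ i0) j0 (Finset.mem_univ j0) hRel⟩
end

section
/- Any finite family of half-planes can be colored with 2 colors such that every point of the plane contained in at least 4 of the half-planes is contained in two half-planes of different colors. -/
namespace HP13

/-- crossing lemma: if the steeper line is below at `X₁` (weakly) and above at `X₂`
(strictly), then `X₁ < X₂`. -/
lemma cross_ws {su sw tu tw X₁ X₂ : ℝ} (h : su < sw)
    (h1 : tw + sw * X₁ ≤ tu + su * X₁) (h2 : tu + su * X₂ < tw + sw * X₂) :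
    X₁ < X₂ := by nlinarith

lemma cross_sw {su sw tu tw X₁ X₂ : ℝ} (h : su < sw)
    (h1 : tw + sw * X₁ < tu + su * X₁) (h2 : tu + su * X₂ ≤ tw + sw * X₂) :
    X₁ < X₂ := by nlinarith

variable {ι : Type*} [Fintype ι] [DecidableEq ι]

/-- value of line `i` at `X` -/
def v (s τ : ι → ℝ) (i : ι) (X : ℝ) : ℝ := τ i + s i * X

/-- envelope lines: lex-strictly above all others somewhere -/
def Ee (s τ : ι → ℝ) : Set ι :=
  {i | ∃ X, ∀ j, j ≠ i → v s τ j X < v s τ i X ∨ (v s τ j X = v s τ i X ∧ s j < s i)}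

/-- danger lines: envelope lines that can be the unique envelope member of a
half-plane containing at least two lines -/
def Dd (s τ : ι → ℝ) : Set ι :=
  {h | h ∈ Ee s τ ∧ ∃ X Y, Y ≤ v s τ h X ∧ (∀ e ∈ Ee s τ, Y ≤ v s τ e X → e = h) ∧
     ∃ w, w ≠ h ∧ Y ≤ v s τ w X}

/-- the run of envelope lines ending at `i` with no danger line in between -/
noncomputable def Nn (s τ : ι → ℝ) (i : ι) : Finset ι :=
  @Finset.filter ι
    (fun j => j ∈ Ee s τ ∧ s j ≤ s i ∧ ∀ d ∈ Dd s τ, s d < s j ∨ s i < s d)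
    (Classical.decPred _) Finset.univ

/-- the coloring: `true` = red -/
noncomputable def chi (s τ : ι → ℝ) (i : ι) : Bool :=
  @ite _ (i ∈ Ee s τ ∧ (i ∈ Dd s τ ∨ ¬ Odd (Nn s τ i).card)) (Classical.propDecidable _)
    true false

lemma mem_Nn {s τ : ι → ℝ} {i j : ι} :
    j ∈ Nn s τ i ↔ j ∈ Ee s τ ∧ s j ≤ s i ∧ ∀ d ∈ Dd s τ, s d < s j ∨ s i < s d := by
  simp [Nn]

lemma chi_eq_true {s τ : ι → ℝ} {i : ι} :
    chi s τ i = true ↔ i ∈ Ee s τ ∧ (i ∈ Dd s τ ∨ ¬ Odd (Nn s τ i).card) := by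
  rw [chi]; split <;> simp_all

lemma chi_eq_false {s τ : ι → ℝ} {i : ι} :
    chi s τ i = false ↔ ¬(i ∈ Ee s τ ∧ (i ∈ Dd s τ ∨ ¬ Odd (Nn s τ i).card)) := by
  rw [chi]; split <;> simp_all

section lemmas

variable {s τ : ι → ℝ}

/-- at every `X` there is an envelope line attaining the max -/
lemma exists_lexmax [Nonempty ι] (hs : Function.Injective s) (X : ℝ) :
    ∃ z ∈ Ee s τ, ∀ j, v s τ j X ≤ v s τ z X := by
  obtain ⟨z, -, hz⟩ := Finset.univ.exists_max_image
    (fun i => toLex (v s τ i X, s i)) Finset.univ_nonempty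
  refine ⟨z, ⟨X, fun j hj => ?_⟩, fun j => ?_⟩
  · rcases Prod.Lex.le_iff.1 (hz j (Finset.mem_univ j)) with h | ⟨h1, h2⟩
    · exact Or.inl h
    · exact Or.inr ⟨h1, lt_of_le_of_ne h2 (fun hss => hj (hs hss))⟩
  · rcases Prod.Lex.le_iff.1 (hz j (Finset.mem_univ j)) with h | ⟨h1, -⟩
    · exact le_of_lt h
    · exact le_of_eq h1

/-- the line of maximal slope is an envelope line -/
lemma exists_maxslope [Nonempty ι] (hs : Function.Injective s) :
    ∃ m ∈ Ee s τ, ∀ j, j ≠ m → s j < s m := by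
  obtain ⟨m, -, hm⟩ := Finset.univ.exists_max_image s Finset.univ_nonempty
  have hslt : ∀ j, j ≠ m → s j < s m := fun j hj =>
    lt_of_le_of_ne (hm j (Finset.mem_univ j)) (fun h => hj (hs h))
  obtain ⟨S, hS⟩ : ∃ S, ∀ j, (τ j - τ m) / (s m - s j) ≤ S :=
    ⟨Finset.univ.sup' Finset.univ_nonempty (fun j => (τ j - τ m) / (s m - s j)),
      fun j => Finset.le_sup' (fun j => (τ j - τ m) / (s m - s j)) (Finset.mem_univ j)⟩
  refine ⟨m, ⟨S + 1, fun j hj => ?_⟩, hslt⟩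
  have hpos : 0 < s m - s j := sub_pos.2 (hslt j hj)
  have hq : (τ j - τ m) / (s m - s j) < S + 1 := lt_of_le_of_lt (hS j) (by linarith)
  have := (div_lt_iff₀ hpos).1 hq
  left
  show τ j + s j * (S + 1) < τ m + s m * (S + 1)
  nlinarith

/-- the line of minimal slope is an envelope line -/
lemma exists_minslope [Nonempty ι] (hs : Function.Injective s) :
    ∃ m ∈ Ee s τ, ∀ j, j ≠ m → s m < s j := by
  obtain ⟨m, -, hm⟩ := Finset.univ.exists_min_image s Finset.univ_nonempty
  have hslt : ∀ j, j ≠ m → s m < s j := fun j hj =>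
    lt_of_le_of_ne (hm j (Finset.mem_univ j)) (fun h => hj (hs h.symm))
  obtain ⟨S, hS⟩ : ∃ S, ∀ j, (τ j - τ m) / (s j - s m) ≤ S :=
    ⟨Finset.univ.sup' Finset.univ_nonempty (fun j => (τ j - τ m) / (s j - s m)),
      fun j => Finset.le_sup' (fun j => (τ j - τ m) / (s j - s m)) (Finset.mem_univ j)⟩
  refine ⟨m, ⟨-(S + 1), fun j hj => ?_⟩, hslt⟩
  have hpos : 0 < s j - s m := sub_pos.2 (hslt j hj)
  have hq : (τ j - τ m) / (s j - s m) < S + 1 := lt_of_le_of_lt (hS j) (by linarith)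
  have := (div_lt_iff₀ hpos).1 hq
  left
  show τ j + s j * (-(S + 1)) < τ m + s m * (-(S + 1))
  nlinarith

/-- an envelope line dominates the min of lines on both sides of it, everywhere -/
lemma min_dom {g e e' : ι} (hg : g ∈ Ee s τ) (h1 : s e < s g) (h2 : s g < s e') (X : ℝ) :
    min (v s τ e X) (v s τ e' X) ≤ v s τ g X := by
  by_contra hcon
  push_neg at hcon
  obtain ⟨hce, hce'⟩ := lt_min_iff.1 hcon
  obtain ⟨Xg, hXg⟩ := hg
  have hne : e ≠ g := fun h => absurd h1 (by rw [h]; exact lt_irrefl _)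
  have hne' : e' ≠ g := fun h => absurd h2 (by rw [h]; exact lt_irrefl _)
  have hEg : v s τ e Xg ≤ v s τ g Xg := by
    rcases hXg e hne with h | ⟨h, -⟩
    · exact le_of_lt h
    · exact le_of_eq h
  have hEg' : v s τ e' Xg ≤ v s τ g Xg := by
    rcases hXg e' hne' with h | ⟨h, -⟩
    · exact le_of_lt h
    · exact le_of_eq h
  simp only [v] at hce hce' hEg hEg'
  have hlt1 : X < Xg := cross_sw h1 hce hEg
  have hlt2 : Xg < X := cross_ws h2 hEg' hce'
  linarith

/-- bracket lemma: a non-envelope line is dominated by the two adjacent envelope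
lines around it -/
lemma bracket [Nonempty ι] (hs : Function.Injective s) {w : ι} (hw : w ∉ Ee s τ) :
    ∃ ha hb, ha ∈ Ee s τ ∧ hb ∈ Ee s τ ∧ s ha < s w ∧ s w < s hb ∧
      (∀ g ∈ Ee s τ, s g < s w → s g ≤ s ha) ∧
      (∀ g ∈ Ee s τ, s w < s g → s hb ≤ s g) ∧
      ∀ X, v s τ w X ≤ max (v s τ ha X) (v s τ hb X) := by
  classical
  obtain ⟨M, hM, hMs⟩ := exists_maxslope (τ := τ) hs
  obtain ⟨m0, hm0, hm0s⟩ := exists_minslope (τ := τ) hs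
  have hwM : w ≠ M := fun h => hw (h ▸ hM)
  have hwm0 : w ≠ m0 := fun h => hw (h ▸ hm0)
  set A : Finset ι := Finset.univ.filter (fun g => g ∈ Ee s τ ∧ s g < s w) with hA
  set B : Finset ι := Finset.univ.filter (fun g => g ∈ Ee s τ ∧ s w < s g) with hB
  have hAne : A.Nonempty := ⟨m0, by simp [hA, hm0, hm0s w hwm0]⟩
  have hBne : B.Nonempty := ⟨M, by simp [hB, hM, hMs w hwM]⟩
  obtain ⟨ha, haA, haM⟩ := A.exists_max_image s hAne
  obtain ⟨hb, hbB, hbM⟩ := B.exists_min_image s hBne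
  simp only [hA, Finset.mem_filter, Finset.mem_univ, true_and] at haA
  simp only [hB, Finset.mem_filter, Finset.mem_univ, true_and] at hbB
  have hamax : ∀ g ∈ Ee s τ, s g < s w → s g ≤ s ha := fun g hg hgw =>
    haM g (by simp [hA, hg, hgw])
  have hbmin : ∀ g ∈ Ee s τ, s w < s g → s hb ≤ s g := fun g hg hgw =>
    hbM g (by simp [hB, hg, hgw])
  refine ⟨ha, hb, haA.1, hbB.1, haA.2, hbB.2, hamax, hbmin, fun X => ?_⟩
  by_contra hcon
  push_neg at hcon
  obtain ⟨hca, hcb⟩ := max_lt_iff.1 hcon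
  obtain ⟨z, hz, hzmax⟩ := exists_lexmax (τ := τ) hs X
  have hzw : v s τ w X ≤ v s τ z X := hzmax w
  have hzna : z ≠ ha := fun h => by
    rw [h] at hzmax; have := hzmax w; simp only [v] at *; linarith
  have hznb : z ≠ hb := fun h => by
    rw [h] at hzmax; have := hzmax w; simp only [v] at *; linarith
  have hznw : z ≠ w := fun h => hw (h ▸ hz)
  rcases lt_or_gt_of_ne (fun h => hznw (hs h) : s z ≠ s w) with hzlt | hzgt
  · -- s z < s w : use ha
    have hzla : s z < s ha :=
      lt_of_le_of_ne (hamax z hz hzlt) (fun h => hzna (hs h))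
    obtain ⟨Xa, hXa⟩ := haA.1
    have h1 : v s τ w Xa ≤ v s τ ha Xa := by
      rcases hXa w (fun h => hw (h ▸ haA.1)) with h | ⟨h, -⟩
      · exact le_of_lt h
      · exact le_of_eq h
    have h2 : v s τ z Xa ≤ v s τ ha Xa := by
      rcases hXa z hzna with h | ⟨h, -⟩
      · exact le_of_lt h
      · exact le_of_eq h
    have hca' : v s τ ha X < v s τ z X := lt_of_lt_of_le (lt_of_lt_of_le hca hzw) le_rfl
    simp only [v] at h1 h2 hca hca' hzw
    have c1 : Xa < X := cross_ws haA.2 h1 (by linarith)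
    have c2 : X < Xa := cross_sw hzla hca' h2
    linarith
  · -- s w < s z : use hb
    have hzlb : s hb < s z :=
      lt_of_le_of_ne (hbmin z hz hzgt) (fun h => hznb (hs h.symm))
    obtain ⟨Xb, hXb⟩ := hbB.1
    have h1 : v s τ w Xb ≤ v s τ hb Xb := by
      rcases hXb w (fun h => hw (h ▸ hbB.1)) with h | ⟨h, -⟩
      · exact le_of_lt h
      · exact le_of_eq h
    have h2 : v s τ z Xb ≤ v s τ hb Xb := by
      rcases hXb z hznb with h | ⟨h, -⟩
      · exact le_of_lt h
      · exact le_of_eq h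
    have hcb' : v s τ hb X < v s τ z X := lt_of_lt_of_le (lt_of_lt_of_le hcb hzw) le_rfl
    simp only [v] at h1 h2 hcb hcb' hzw
    have c1 : X < Xb := cross_sw hbB.2 hcb h1
    have c2 : Xb < X := cross_ws hzlb h2 hcb'
    linarith

/-- key geometric fact: the middle of three consecutive envelope lines all contained
in a half-plane consisting only of envelope lines is not a danger line. -/
lemma middle_not_danger [Nonempty ι] (hs : Function.Injective s) {X₀ Y₀ : ℝ} {eL e eU : ι}
    (hSE : ∀ i, Y₀ ≤ v s τ i X₀ → i ∈ Ee s τ)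
    (heL : eL ∈ Ee s τ) (he : e ∈ Ee s τ) (heU : eU ∈ Ee s τ)
    (h1 : s eL < s e) (h2 : s e < s eU)
    (adjL : ∀ g ∈ Ee s τ, s g < s e → s g ≤ s eL)
    (adjU : ∀ g ∈ Ee s τ, s e < s g → s eU ≤ s g)
    (mL : Y₀ ≤ v s τ eL X₀) (mU : Y₀ ≤ v s τ eU X₀) :
    e ∉ Dd s τ := by
  rintro ⟨heE, X₁, Y₁, hmem, honly, w, hwne, hwmem⟩
  have hwE : w ∉ Ee s τ := fun hwE => hwne (honly w hwE hwmem)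
  have hwS0 : v s τ w X₀ < Y₀ := lt_of_not_ge (fun h => hwE (hSE w h))
  obtain ⟨ha, hb, haE, hbE, hasw, hswb, hamax, hbmin, hdom⟩ := bracket hs hwE
  have hLe : eL ≠ e := fun h => absurd h1 (by rw [h]; exact lt_irrefl _)
  have hUe : eU ≠ e := fun h => absurd h2 (by rw [h]; exact lt_irrefl _)
  have hLS1 : v s τ eL X₁ < Y₁ := lt_of_not_ge (fun h => hLe (honly eL heL h))
  have hUS1 : v s τ eU X₁ < Y₁ := lt_of_not_ge (fun h => hUe (honly eU heU h))
  have hwneU : eU ≠ w := fun h => hwE (h ▸ heU)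
  have hwneL : eL ≠ w := fun h => hwE (h ▸ heL)
  -- establish s eL < s w < s eU
  have key : s eL < s w ∧ s w < s eU := by
    have hone : Y₁ ≤ v s τ ha X₁ ∨ Y₁ ≤ v s τ hb X₁ := by
      rcases le_max_iff.1 (le_trans hwmem (hdom X₁)) with h | h
      · exact Or.inl h
      · exact Or.inr h
    rcases hone with hha | hhb
    · have hae : ha = e := honly ha haE hha
      rw [hae] at hasw hamax
      constructor
      · linarith
      · by_contra hcon
        push_neg at hcon
        have : s eU < s w := lt_of_le_of_ne hcon (fun h => hwneU (hs h))
        have := hamax eU heU this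
        linarith
    · have hbe : hb = e := honly hb hbE hhb
      rw [hbe] at hswb hbmin
      constructor
      · by_contra hcon
        push_neg at hcon
        have : s w < s eL := lt_of_le_of_ne hcon (fun h => hwneL (hs h.symm))
        have := hbmin eL heL this
        linarith
      · linarith
  obtain ⟨kL, kU⟩ := key
  have e1 : v s τ w X₀ ≤ v s τ eL X₀ := le_of_lt (lt_of_lt_of_le hwS0 mL)
  have e2 : v s τ eL X₁ < v s τ w X₁ := lt_of_lt_of_le hLS1 hwmem
  have e3 : v s τ w X₀ < v s τ eU X₀ := lt_of_lt_of_le hwS0 mU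
  have e4 : v s τ eU X₁ ≤ v s τ w X₁ := le_of_lt (lt_of_lt_of_le hUS1 hwmem)
  simp only [v] at e1 e2 e3 e4
  have c1 : X₀ < X₁ := cross_ws kL e1 e2
  have c2 : X₁ < X₀ := cross_ws kU e4 e3
  linarith

/-- adjacent envelope lines, both non-danger, have runs differing by exactly one -/
lemma Nn_adj (hs : Function.Injective s) {u w : ι} (hu : u ∈ Ee s τ) (hw : w ∈ Ee s τ)
    (huw : s u < s w) (adj : ∀ g ∈ Ee s τ, ¬(s u < s g ∧ s g < s w))
    (huD : u ∉ Dd s τ) (hwD : w ∉ Dd s τ) :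
    Nn s τ w = insert w (Nn s τ u) ∧ w ∉ Nn s τ u := by
  have hDE : ∀ d, d ∈ Dd s τ → d ∈ Ee s τ := fun d hd => hd.1
  constructor
  · ext j
    simp only [Finset.mem_insert, mem_Nn]
    constructor
    · rintro ⟨hjE, hjle, hjD⟩
      rcases eq_or_ne j w with h | h
      · exact Or.inl h
      · right
        have hjw : s j < s w := lt_of_le_of_ne hjle (fun hh => h (hs hh))
        have hju : s j ≤ s u := by
          by_contra hcon
          push_neg at hcon
          exact adj j hjE ⟨hcon, hjw⟩
        refine ⟨hjE, hju, fun d hd => ?_⟩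
        rcases hjD d hd with h' | h'
        · exact Or.inl h'
        · exact Or.inr (lt_trans huw h')
    · rintro (h | ⟨hjE, hjle, hjD⟩)
      · subst h
        refine ⟨hw, le_rfl, fun d hd => ?_⟩
        have : d ≠ j := fun hh => hwD (hh ▸ hd)
        rcases lt_or_gt_of_ne (fun hh => this (hs hh) : s d ≠ s j) with h' | h'
        · exact Or.inl h'
        · exact Or.inr h'
      · refine ⟨hjE, le_of_lt (lt_of_le_of_lt hjle huw), fun d hd => ?_⟩
        rcases hjD d hd with h' | h'
        · exact Or.inl h'
        · right
          have hdw : ¬ s d < s w := fun hh => adj d (hDE d hd) ⟨h', hh⟩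
          push_neg at hdw
          exact lt_of_le_of_ne hdw (fun hh => hwD ((hs hh.symm).symm ▸ hd))
  · rw [mem_Nn]
    rintro ⟨-, hle, -⟩
    linarith

end lemmas

/-- The key lemma: lines with distinct slopes can be 2-colored so that any upper
half-plane containing ≥ 2 lines contains a red one, and one containing ≥ 3 lines
contains also a blue one. -/
lemma keyLemma {s τ : ι → ℝ} (hs : Function.Injective s) :
    ∃ χ : ι → Bool, ∀ X Y : ℝ,
      (2 ≤ {i | Y ≤ τ i + s i * X}.ncard → ∃ i, Y ≤ τ i + s i * X ∧ χ i = true) ∧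
      (3 ≤ {i | Y ≤ τ i + s i * X}.ncard →
        (∃ i, Y ≤ τ i + s i * X ∧ χ i = true) ∧ (∃ i, Y ≤ τ i + s i * X ∧ χ i = false)) := by
  classical
  refine ⟨chi s τ, fun X Y => ?_⟩
  set T : Finset ι := Finset.univ.filter (fun i => Y ≤ v s τ i X) with hT
  have hTS : {i | Y ≤ τ i + s i * X} = (↑T : Set ι) := by
    ext i; rw [Finset.mem_coe, hT, Finset.mem_filter]; simp [v]
  have hmemT : ∀ i, i ∈ T ↔ Y ≤ v s τ i X := by intro i; simp [hT]
  rw [hTS, Set.ncard_coe_finset]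
  -- alpha: at least 2 elements implies a red one
  have alpha : 2 ≤ T.card → ∃ i, Y ≤ τ i + s i * X ∧ chi s τ i = true := by
    intro h2
    obtain ⟨i0, hi0⟩ := Finset.card_pos.1 (by omega : 0 < T.card)
    haveI : Nonempty ι := ⟨i0⟩
    obtain ⟨z, hzE, hzmax⟩ := exists_lexmax (τ := τ) hs X
    have hzS : Y ≤ v s τ z X := le_trans ((hmemT i0).1 hi0) (hzmax i0)
    by_cases hone : ∀ e ∈ Ee s τ, Y ≤ v s τ e X → e = z
    · obtain ⟨w, hwT, hwne⟩ := Finset.exists_mem_ne (s := T) (by omega) z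
      have hzD : z ∈ Dd s τ := ⟨hzE, X, Y, hzS, hone, w, hwne, (hmemT w).1 hwT⟩
      exact ⟨z, hzS, chi_eq_true.2 ⟨hzE, Or.inl hzD⟩⟩
    · push_neg at hone
      obtain ⟨e', he'E, he'S, he'ne⟩ := hone
      set TE : Finset ι := Finset.univ.filter (fun i => i ∈ Ee s τ ∧ Y ≤ v s τ i X) with hTE
      have hmemTE : ∀ i, i ∈ TE ↔ i ∈ Ee s τ ∧ Y ≤ v s τ i X := by intro i; simp [hTE]
      obtain ⟨e₁, he₁TE, he₁M⟩ := TE.exists_max_image s ⟨z, (hmemTE z).2 ⟨hzE, hzS⟩⟩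
      have hne2 : (TE.erase e₁).Nonempty := by
        rcases eq_or_ne z e₁ with h | h
        · exact ⟨e', Finset.mem_erase.2 ⟨h ▸ he'ne, (hmemTE e').2 ⟨he'E, he'S⟩⟩⟩
        · exact ⟨z, Finset.mem_erase.2 ⟨h, (hmemTE z).2 ⟨hzE, hzS⟩⟩⟩
      obtain ⟨e₂, he₂TE', he₂M⟩ := (TE.erase e₁).exists_max_image s hne2
      obtain ⟨he₂ne, he₂TE⟩ := Finset.mem_erase.1 he₂TE'
      have he₁E := ((hmemTE e₁).1 he₁TE).1
      have he₁S := ((hmemTE e₁).1 he₁TE).2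
      have he₂E := ((hmemTE e₂).1 he₂TE).1
      have he₂S := ((hmemTE e₂).1 he₂TE).2
      have hlt : s e₂ < s e₁ :=
        lt_of_le_of_ne (he₁M e₂ he₂TE) (fun h => he₂ne (hs h))
      have adj : ∀ g ∈ Ee s τ, ¬(s e₂ < s g ∧ s g < s e₁) := by
        rintro g hgE ⟨hg1, hg2⟩
        have hgS : Y ≤ v s τ g X :=
          le_trans (le_min he₂S he₁S) (min_dom hgE hg1 hg2 X)
        have hgne : g ≠ e₁ := fun h => absurd hg2 (by rw [h]; exact lt_irrefl _)
        have := he₂M g (Finset.mem_erase.2 ⟨hgne, (hmemTE g).2 ⟨hgE, hgS⟩⟩)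
        linarith
      by_cases hc2 : chi s τ e₂ = true
      · exact ⟨e₂, he₂S, hc2⟩
      by_cases hc1 : chi s τ e₁ = true
      · exact ⟨e₁, he₁S, hc1⟩
      exfalso
      rw [Bool.not_eq_true, chi_eq_false] at hc1 hc2
      push_neg at hc1 hc2
      obtain ⟨he₂D, hodd₂⟩ := hc2 he₂E
      obtain ⟨he₁D, hodd₁⟩ := hc1 he₁E
      obtain ⟨heq, hnot⟩ := Nn_adj hs he₂E he₁E hlt adj he₂D he₁D
      rw [heq, Finset.card_insert_of_notMem hnot] at hodd₁
      rw [Nat.odd_iff] at hodd₁ hodd₂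
      omega
  refine ⟨alpha, fun h3 => ⟨alpha (by omega), ?_⟩⟩
  -- beta : at least 3 elements implies a blue one
  by_cases hnonE : ∃ i, Y ≤ v s τ i X ∧ i ∉ Ee s τ
  · obtain ⟨i, hiS, hiE⟩ := hnonE
    exact ⟨i, hiS, chi_eq_false.2 (fun h => hiE h.1)⟩
  push_neg at hnonE
  -- now every element of the half-plane is an envelope line
  by_contra hcon
  push_neg at hcon
  obtain ⟨i0, hi0⟩ := Finset.card_pos.1 (by omega : 0 < T.card)
  haveI : Nonempty ι := ⟨i0⟩
  obtain ⟨e₁, he₁T, he₁M⟩ := T.exists_max_image s ⟨i0, hi0⟩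
  obtain ⟨e₃, he₃T, he₃M⟩ := T.exists_min_image s ⟨i0, hi0⟩
  have hne13 : e₁ ≠ e₃ := by
    intro h
    have hsub : T ⊆ {e₁} := by
      intro x hx
      have h1 := he₁M x hx
      have h2 := he₃M x hx
      rw [← h] at h2
      simp only [Finset.mem_singleton]
      exact hs (le_antisymm h1 h2)
    have := Finset.card_le_card hsub
    simp at this; omega
  have hne2 : (T.erase e₁).Nonempty := ⟨e₃, Finset.mem_erase.2 ⟨fun h => hne13 h.symm, he₃T⟩⟩
  obtain ⟨e, heT', heM⟩ := (T.erase e₁).exists_max_image s hne2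
  obtain ⟨hene, heT⟩ := Finset.mem_erase.1 heT'
  have hene3 : e ≠ e₃ := by
    intro h
    have hsub : T.erase e₁ ⊆ {e} := by
      intro x hx
      have h1 := heM x hx
      have h2 := he₃M x (Finset.mem_of_mem_erase hx)
      rw [← h] at h2
      simp only [Finset.mem_singleton]
      exact hs (le_antisymm h1 h2)
    have h4 := Finset.card_le_card hsub
    have h5 := Finset.card_erase_of_mem he₁T
    simp at h4; omega
  have hSE : ∀ i, Y ≤ v s τ i X → i ∈ Ee s τ := fun i hi => hnonE i hi
  have heE : e ∈ Ee s τ := hSE e ((hmemT e).1 heT)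
  have he₁E : e₁ ∈ Ee s τ := hSE e₁ ((hmemT e₁).1 he₁T)
  have he₃E : e₃ ∈ Ee s τ := hSE e₃ ((hmemT e₃).1 he₃T)
  have hlt31 : s e₃ < s e := lt_of_le_of_ne (by
      have := he₃M e heT; exact this) (fun h => hene3 (hs h.symm))
  have hlt1 : s e < s e₁ := lt_of_le_of_ne (he₁M e heT) (fun h => hene (hs h))
  -- adjacent envelope elements around e
  set EL : Finset ι := Finset.univ.filter (fun g => g ∈ Ee s τ ∧ s g < s e) with hEL
  set EU : Finset ι := Finset.univ.filter (fun g => g ∈ Ee s τ ∧ s e < s g) with hEU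
  obtain ⟨eL, heLEL, heLM⟩ := EL.exists_max_image s ⟨e₃, by simp [hEL, he₃E, hlt31]⟩
  obtain ⟨eU, heUEU, heUM⟩ := EU.exists_min_image s ⟨e₁, by simp [hEU, he₁E, hlt1]⟩
  simp only [hEL, Finset.mem_filter, Finset.mem_univ, true_and] at heLEL
  simp only [hEU, Finset.mem_filter, Finset.mem_univ, true_and] at heUEU
  have adjL : ∀ g ∈ Ee s τ, s g < s e → s g ≤ s eL := fun g hg hgs =>
    heLM g (by simp [hEL, hg, hgs])
  have adjU : ∀ g ∈ Ee s τ, s e < s g → s eU ≤ s g := fun g hg hgs =>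
    heUM g (by simp [hEU, hg, hgs])
  have heLS : Y ≤ v s τ eL X := by
    rcases eq_or_ne eL e₃ with h | h
    · rw [h]; exact (hmemT e₃).1 he₃T
    · have h31 : s e₃ < s eL := lt_of_le_of_ne (adjL e₃ he₃E hlt31) (fun hh => h (hs hh.symm))
      exact le_trans (le_min ((hmemT e₃).1 he₃T) ((hmemT e).1 heT))
        (min_dom heLEL.1 h31 heLEL.2 X)
  have heUS : Y ≤ v s τ eU X := by
    rcases eq_or_ne eU e₁ with h | h
    · rw [h]; exact (hmemT e₁).1 he₁T
    · have h11 : s eU < s e₁ := lt_of_le_of_ne (adjU e₁ he₁E hlt1) (fun hh => h (hs hh))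
      exact le_trans (le_min ((hmemT e).1 heT) ((hmemT e₁).1 he₁T))
        (min_dom heUEU.1 heUEU.2 h11 X)
  have heD : e ∉ Dd s τ :=
    middle_not_danger hs hSE heLEL.1 heE heUEU.1 heLEL.2 heUEU.2 adjL adjU heLS heUS
  -- e is red, so its run has even length
  have hered : chi s τ e = true := by
    rcases Bool.eq_false_or_eq_true (chi s τ e) with h | h
    · exact h
    · exact absurd h (hcon e (by simpa [v] using (hmemT e).1 heT))
  have heven : ¬ Odd (Nn s τ e).card := by
    rcases (chi_eq_true.1 hered).2 with h | h
    · exact absurd h heD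
    · exact h
  have heNe : e ∈ Nn s τ e := by
    rw [mem_Nn]
    refine ⟨heE, le_rfl, fun d hd => ?_⟩
    have : d ≠ e := fun hh => heD (hh ▸ hd)
    rcases lt_or_gt_of_ne (fun hh => this (hs hh) : s d ≠ s e) with h' | h'
    · exact Or.inl h'
    · exact Or.inr h'
  have hcard2 : 2 ≤ (Nn s τ e).card := by
    have h1 : 1 ≤ (Nn s τ e).card := Finset.card_pos.2 ⟨e, heNe⟩
    have h2 := Nat.not_odd_iff_even.1 heven
    obtain ⟨k, hk⟩ := h2
    omega
  obtain ⟨j, hjN, hjne⟩ :=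
    Finset.exists_mem_ne (s := Nn s τ e) (by omega) e
  rw [mem_Nn] at hjN
  obtain ⟨hjE, hjle, hjD⟩ := hjN
  have hjlt : s j < s e := lt_of_le_of_ne hjle (fun h => hjne (hs h))
  have hjeL : s j ≤ s eL := adjL j hjE hjlt
  have heLD : eL ∉ Dd s τ := by
    intro hd
    rcases hjD eL hd with h' | h'
    · linarith
    · linarith [heLEL.2]
  obtain ⟨heq, hnot⟩ := Nn_adj hs heLEL.1 heE heLEL.2
    (fun g hg ⟨hg1, hg2⟩ => absurd (adjL g hg hg2) (not_le.2 hg1)) heLD heD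
  have hoddL : Odd (Nn s τ eL).card := by
    have hcards : (Nn s τ e).card = (Nn s τ eL).card + 1 := by
      rw [heq, Finset.card_insert_of_notMem hnot]
    rw [Nat.odd_iff] at heven ⊢
    omega
  have heLblue : chi s τ eL = false := by
    rw [chi_eq_false]
    rintro ⟨-, h | h⟩
    · exact heLD h
    · exact h hoddL
  exact (hcon eL (by simpa [v] using heLS)) heLblue

end HP13

theorem stmt13 (n : ℕ) (H : Fin n → ℝ × ℝ × ℝ)
    (hH : ∀ i, ((H i).1, (H i).2.1) ≠ ((0 : ℝ), (0 : ℝ))) :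
    ∃ f : Fin n → Fin 2, ∀ p : ℝ × ℝ,
      4 ≤ {i : Fin n | p ∈ halfPlane (H i).1 (H i).2.1 (H i).2.2}.ncard →
      ∃ i j : Fin n, p ∈ halfPlane (H i).1 (H i).2.1 (H i).2.2 ∧
        p ∈ halfPlane (H j).1 (H j).2.1 (H j).2.2 ∧ f i ≠ f j := by
  classical
  open HP13 in
  set a : Fin n → ℝ := fun i => (H i).1 with ha
  set b : Fin n → ℝ := fun i => (H i).2.1 with hb
  set c : Fin n → ℝ := fun i => (H i).2.2 with hc
  -- choose a shear parameter t with a i * t + b i ≠ 0 for all i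
  obtain ⟨t, ht⟩ : ∃ t : ℝ, ∀ i, a i * t + b i ≠ 0 := by
    obtain ⟨t, htt⟩ := Infinite.exists_notMem_finset
      (Finset.univ.image (fun i : Fin n => -(b i) / a i))
    refine ⟨t, fun i => ?_⟩
    rcases eq_or_ne (a i) 0 with h0 | h0
    · have hbne : b i ≠ 0 := by
        intro hbi
        exact hH i (by simp [ha, hb] at h0 hbi ⊢; exact ⟨h0, hbi⟩)
      rw [h0]; simpa using hbne
    · intro hzero
      apply htt
      refine Finset.mem_image.2 ⟨i, Finset.mem_univ _, ?_⟩
      field_simp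
      linarith
  set β : Fin n → ℝ := fun i => a i * t + b i with hβdef
  have hβ : ∀ i, β i ≠ 0 := ht
  set sl : Fin n → ℝ := fun i => -(a i) / β i with hsl
  set τ : Fin n → ℝ := fun i => c i / β i with hτ
  -- membership in sheared-normalized form
  have m1 : ∀ (i : Fin n) (p : ℝ × ℝ), p ∈ halfPlane (a i) (b i) (c i) ↔
      a i * (p.1 - t * p.2) + β i * p.2 ≤ c i := by
    intro i p
    have : a i * (p.1 - t * p.2) + β i * p.2 = a i * p.1 + b i * p.2 := by
      simp only [hβdef]; ring
    rw [halfPlane, Set.mem_setOf_eq, ← this]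
  have mτ : ∀ (i : Fin n) (X : ℝ), τ i + sl i * X = (c i - a i * X) / β i := by
    intro i X
    rw [hτ, hsl]
    field_simp
    ring
  have m2 : ∀ (i : Fin n) (X Y : ℝ), 0 < β i →
      (a i * X + β i * Y ≤ c i ↔ Y ≤ τ i + sl i * X) := by
    intro i X Y hpos
    rw [mτ, le_div_iff₀ hpos]
    constructor <;> intro h <;> nlinarith
  have m3 : ∀ (i : Fin n) (X Y : ℝ), β i < 0 →
      (a i * X + β i * Y ≤ c i ↔ τ i + sl i * X ≤ Y) := by
    intro i X Y hneg
    rw [mτ, div_le_iff_of_neg hneg]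
    constructor <;> intro h <;> nlinarith
  -- classes and ranks
  set Cls : Fin n → Fin n → Prop := fun i j => (0 < β i ↔ 0 < β j) ∧ sl i = sl j with hCls
  have hClsrefl : ∀ i, Cls i i := fun i => ⟨Iff.rfl, rfl⟩
  have hClssymm : ∀ {i j}, Cls i j → Cls j i := fun h => ⟨h.1.symm, h.2.symm⟩
  have hClstrans : ∀ {i j k}, Cls i j → Cls j k → Cls i k :=
    fun h1 h2 => ⟨h1.1.trans h2.1, h1.2.trans h2.2⟩
  set keyv : Fin n → ℝ ×ₗ (Fin n) := fun i => toLex ((if 0 < β i then τ i else -τ i), i)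
    with hkeyv
  have hkeyvinj : ∀ {i j}, keyv i = keyv j → i = j := by
    intro i j h
    have := toLex_inj.1 h
    exact congrArg Prod.snd this
  set above : Fin n → Finset (Fin n) :=
    fun i => Finset.univ.filter (fun j => Cls i j ∧ keyv i < keyv j) with habove
  set rank : Fin n → ℕ := fun i => (above i).card with hrank
  have hmemabove : ∀ i j, j ∈ above i ↔ Cls i j ∧ keyv i < keyv j := by
    intro i j; simp [habove]
  -- tops of classes
  have hex : ∀ i : Fin n, ∃ m, Cls i m ∧ above m = ∅ := by
    intro i
    obtain ⟨m, hmK, hmM⟩ := (Finset.univ.filter (fun j => Cls i j)).exists_max_image keyv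
      ⟨i, by simp only [Finset.mem_filter, Finset.mem_univ, true_and]; exact hClsrefl i⟩
    simp only [Finset.mem_filter, Finset.mem_univ, true_and] at hmK
    refine ⟨m, hmK, ?_⟩
    rw [Finset.eq_empty_iff_forall_notMem]
    intro j hj
    rw [hmemabove] at hj
    have hjK : Cls i j := hClstrans hmK hj.1
    have := hmM j (by
      simp only [Finset.mem_filter, Finset.mem_univ, true_and]; exact hjK)
    exact absurd hj.2 (not_lt.2 this)
  choose top htopC htopA using hex
  have huniq : ∀ i j, Cls i j → above i = ∅ → above j = ∅ → i = j := by
    intro i j hC hi hj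
    by_contra hne
    have hk : keyv i ≠ keyv j := fun h => hne (hkeyvinj h)
    rcases lt_or_gt_of_ne hk with h | h
    · have : j ∈ above i := (hmemabove i j).2 ⟨hC, h⟩
      rw [hi] at this; exact absurd this (Finset.notMem_empty j)
    · have : i ∈ above j := (hmemabove j i).2 ⟨hClssymm hC, h⟩
      rw [hj] at this; exact absurd this (Finset.notMem_empty i)
  have htopinv : ∀ i j, Cls i j → top i = top j := by
    intro i j hC
    exact huniq _ _ (hClstrans (hClstrans (hClssymm (htopC i)) hC) (htopC j))
      (htopA i) (htopA j)
  have htopself : ∀ i, above i = ∅ → top i = i := by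
    intro i hi
    exact huniq _ _ (hClssymm (htopC i)) (htopA i) hi
  -- upset property
  have hupset : ∀ (p : ℝ × ℝ) i j, p ∈ halfPlane (a i) (b i) (c i) → Cls i j →
      keyv i < keyv j → p ∈ halfPlane (a j) (b j) (c j) := by
    intro p i j hmem hC hlt
    set X := p.1 - t * p.2
    set Y := p.2
    have hkle : (if 0 < β i then τ i else -τ i) ≤ (if 0 < β j then τ j else -τ j) := by
      rcases Prod.Lex.le_iff.1 (le_of_lt hlt) with h | ⟨h, -⟩
      · exact le_of_lt h
      · exact le_of_eq h
    rcases lt_trichotomy (β i) 0 with hneg | hzero | hpos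
    · have hnegj : β j < 0 := by
        rcases lt_trichotomy (β j) 0 with h | h | h
        · exact h
        · exact absurd h (hβ j)
        · exact absurd (hC.1.2 h) (by linarith)
      rw [if_neg (by linarith), if_neg (by linarith)] at hkle
      have hτ' : τ j ≤ τ i := by linarith
      rw [m1, m3 j X Y hnegj]
      rw [m1, m3 i X Y hneg] at hmem
      rw [← hC.2]
      linarith
    · exact absurd hzero (hβ i)
    · have hposj : 0 < β j := hC.1.1 hpos
      rw [if_pos hpos, if_pos hposj] at hkle
      rw [m1, m2 j X Y hposj]
      rw [m1, m2 i X Y hpos] at hmem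
      rw [← hC.2]
      linarith
  -- the two key-lemma colorings
  set PL : Fin n → Prop := fun i => 0 < β i ∧ above i = ∅ with hPL
  set PU : Fin n → Prop := fun i => β i < 0 ∧ above i = ∅ with hPU
  have hinjL : Function.Injective (fun x : {i // PL i} => sl x.1) := by
    rintro ⟨x, hx⟩ ⟨y, hy⟩ h
    simp only at h
    have hC : Cls x y := ⟨by constructor <;> intro <;> [exact hy.1; exact hx.1], h⟩
    exact Subtype.ext (huniq x y hC hx.2 hy.2)
  have hinjU : Function.Injective (fun x : {i // PU i} => -(sl x.1)) := by
    rintro ⟨x, hx⟩ ⟨y, hy⟩ h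
    simp only [neg_inj] at h
    have hC : Cls x y :=
      ⟨by constructor <;> intro hh <;> [linarith [hx.1, hy.1]; linarith [hx.1, hy.1]], h⟩
    exact Subtype.ext (huniq x y hC hx.2 hy.2)
  obtain ⟨χL, hχL⟩ := keyLemma (τ := fun x : {i // PL i} => τ x.1) hinjL
  obtain ⟨χU, hχU⟩ := keyLemma (τ := fun x : {i // PU i} => -(τ x.1)) hinjU
  -- the final coloring
  set baseB : Fin n → Bool := fun i =>
    if h : PL (top i) then χL ⟨top i, h⟩
    else if h' : PU (top i) then !(χU ⟨top i, h'⟩) else true with hbaseB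
  set colorOf : Fin n → Bool := fun i => xor (baseB i) (decide (rank i % 2 = 1))
    with hcolorOf
  refine ⟨fun i => if colorOf i then 0 else 1, fun p h4 => ?_⟩
  have hbij : Function.Injective (fun bb : Bool => if bb then (0 : Fin 2) else 1) := by
    decide
  have hfne : ∀ {i j : Fin n}, colorOf i ≠ colorOf j →
      (if colorOf i then (0 : Fin 2) else 1) ≠ (if colorOf j then 0 else 1) := by
    intro i j h hEq
    exact h (hbij hEq)
  set Spf : Finset (Fin n) :=
    Finset.univ.filter (fun i => p ∈ halfPlane (a i) (b i) (c i)) with hSpf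
  have hmemSpf : ∀ i, i ∈ Spf ↔ p ∈ halfPlane (a i) (b i) (c i) := by
    intro i; simp [hSpf]
  have hcard4 : 4 ≤ Spf.card := by
    have : {i : Fin n | p ∈ halfPlane (H i).1 (H i).2.1 (H i).2.2} = (↑Spf : Set (Fin n)) := by
      ext i; simp [hSpf, ha, hb, hc]
    rwa [this, Set.ncard_coe_finset] at h4
  by_cases hsame : ∃ i ∈ Spf, ∃ j ∈ Spf, i ≠ j ∧ Cls i j
  · -- two members of the same class: adjacent ranks give different colors
    obtain ⟨i, hiS, j, hjS, hij, hCij⟩ := hsame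
    set K' : Finset (Fin n) := Spf.filter (fun k => Cls i k) with hK'
    have hmemK' : ∀ k, k ∈ K' ↔ k ∈ Spf ∧ Cls i k := by intro k; simp [hK']
    have hiK' : i ∈ K' := (hmemK' i).2 ⟨hiS, hClsrefl i⟩
    have hjK' : j ∈ K' := (hmemK' j).2 ⟨hjS, hCij⟩
    obtain ⟨w, hwK', hwM⟩ := K'.exists_min_image keyv ⟨i, hiK'⟩
    have hne2 : (K'.erase w).Nonempty := by
      rcases eq_or_ne i w with h | h
      · exact ⟨j, Finset.mem_erase.2 ⟨fun hh => hij (h ▸ hh).symm, hjK'⟩⟩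
      · exact ⟨i, Finset.mem_erase.2 ⟨h, hiK'⟩⟩
    obtain ⟨u, huK'e, huM⟩ := (K'.erase w).exists_min_image keyv hne2
    obtain ⟨hune, huK'⟩ := Finset.mem_erase.1 huK'e
    have hCwu : Cls w u := hClstrans (hClssymm ((hmemK' w).1 hwK').2) ((hmemK' u).1 huK').2
    have hkwu : keyv w < keyv u :=
      lt_of_le_of_ne (hwM u huK') (fun h => hune (hkeyvinj h).symm)
    -- above w = insert u (above u)
    have hab : above w = insert u (above u) := by
      ext x
      rw [hmemabove, Finset.mem_insert, hmemabove]
      constructor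
      · rintro ⟨hCwx, hkwx⟩
        rcases eq_or_ne x u with h | h
        · exact Or.inl h
        · right
          refine ⟨hClstrans (hClssymm hCwu) hCwx, ?_⟩
          rcases lt_trichotomy (keyv u) (keyv x) with h' | h' | h'
          · exact h'
          · exact absurd (hkeyvinj h').symm h
          · exfalso
            have hxS : p ∈ halfPlane (a x) (b x) (c x) :=
              hupset p w x ((hmemSpf w).1 ((hmemK' w).1 hwK').1) hCwx hkwx
            have hxK' : x ∈ K' := (hmemK' x).2 ⟨(hmemSpf x).2 hxS,
              hClstrans ((hmemK' w).1 hwK').2 hCwx⟩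
            have hxne : x ≠ w := fun hh =>
              absurd hkwx (by rw [hh]; exact lt_irrefl _)
            have := huM x (Finset.mem_erase.2 ⟨hxne, hxK'⟩)
            exact absurd h' (not_lt.2 this)
      · rintro (h | ⟨hCux, hkux⟩)
        · exact h ▸ ⟨hCwu, hkwu⟩
        · exact ⟨hClstrans hCwu hCux, lt_trans hkwu hkux⟩
    have hunotin : u ∉ above u := by
      rw [hmemabove]; rintro ⟨-, h⟩; exact absurd h (lt_irrefl _)
    have hrankwu : rank w = rank u + 1 := by
      rw [hrank]
      simp only [hab, Finset.card_insert_of_notMem hunotin]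
    have hbasewu : baseB w = baseB u := by
      rw [hbaseB]
      simp only
      rw [htopinv w u hCwu]
    have hd : (decide (rank w % 2 = 1)) ≠ (decide (rank u % 2 = 1)) := by
      rw [hrankwu]
      rcases Nat.mod_two_eq_zero_or_one (rank u) with h | h <;>
        simp [Nat.add_mod, h]
    have hcolne : colorOf w ≠ colorOf u := by
      rw [hcolorOf]
      show xor (baseB w) (decide (rank w % 2 = 1)) ≠ xor (baseB u) (decide (rank u % 2 = 1))
      rw [hbasewu]
      intro hcc
      apply hd
      cases hbu : baseB u <;> rw [hbu] at hcc <;> simpa using hcc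
    exact ⟨w, u, (hmemSpf w).1 ((hmemK' w).1 hwK').1, (hmemSpf u).1 ((hmemK' u).1 huK').1,
      hfne hcolne⟩
  · -- all members are tops of distinct classes
    push_neg at hsame
    have hrank0 : ∀ i ∈ Spf, above i = ∅ := by
      intro i hiS
      rw [Finset.eq_empty_iff_forall_notMem]
      intro j hj
      rw [hmemabove] at hj
      have hjS : j ∈ Spf := (hmemSpf j).2
        (hupset p i j ((hmemSpf i).1 hiS) hj.1 hj.2)
      have hne : i ≠ j := fun h => absurd hj.2 (by rw [h]; exact lt_irrefl _)
      exact hsame i hiS j hjS hne hj.1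
    have hcolor_top : ∀ i ∈ Spf, colorOf i = baseB i := by
      intro i hiS
      rw [hcolorOf]
      simp only [hrank, hrank0 i hiS]
      simp
    have htopP : ∀ i ∈ Spf, PL i ∨ PU i := by
      intro i hiS
      rcases lt_trichotomy (β i) 0 with h | h | h
      · exact Or.inr ⟨h, hrank0 i hiS⟩
      · exact absurd h (hβ i)
      · exact Or.inl ⟨h, hrank0 i hiS⟩
    have hcolL : ∀ i ∈ Spf, ∀ (h : PL i), colorOf i = χL ⟨i, h⟩ := by
      intro i hiS h
      rw [hcolor_top i hiS, hbaseB]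
      simp only [htopself i h.2]
      rw [dif_pos h]
    have hcolU : ∀ i ∈ Spf, ∀ (h : PU i), colorOf i = !(χU ⟨i, h⟩) := by
      intro i hiS h
      rw [hcolor_top i hiS, hbaseB]
      simp only [htopself i h.2]
      have hnPL : ¬ PL i := fun hh => absurd hh.1 (by have := h.1; intro hc; linarith)
      rw [dif_neg hnPL, dif_pos h]
    set SpL : Finset (Fin n) := Spf.filter (fun i => 0 < β i) with hSpL
    set SpU : Finset (Fin n) := Spf.filter (fun i => ¬ 0 < β i) with hSpU
    have hcards : SpL.card + SpU.card = Spf.card :=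
      Finset.card_filter_add_card_filter_not _
    -- bridge to the key lemma for the positive side
    set SLf : Finset {i // PL i} := Finset.univ.filter (fun x => x.1 ∈ Spf) with hSLf
    set SUf : Finset {i // PU i} := Finset.univ.filter (fun x => x.1 ∈ Spf) with hSUf
    have hLiff : ∀ (x : {i // PL i}),
        (p.2 ≤ τ x.1 + sl x.1 * (p.1 - t * p.2)) ↔ x.1 ∈ Spf := by
      intro x
      rw [hmemSpf, m1, m2 x.1 (p.1 - t * p.2) p.2 x.2.1]
    have hUiff : ∀ (x : {i // PU i}),
        (-(p.2) ≤ -(τ x.1) + -(sl x.1) * (p.1 - t * p.2)) ↔ x.1 ∈ Spf := by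
      intro x
      rw [hmemSpf, m1, m3 x.1 (p.1 - t * p.2) p.2 x.2.1]
      constructor <;> intro <;> nlinarith
    have hLcard : SLf.card = SpL.card := by
      refine Finset.card_bij (fun x _ => x.1) ?_ ?_ ?_
      · intro x hx
        rw [hSLf, Finset.mem_filter] at hx
        rw [hSpL, Finset.mem_filter]
        exact ⟨hx.2, x.2.1⟩
      · intro x hx y hy hxy
        exact Subtype.ext hxy
      · intro i hi
        rw [hSpL, Finset.mem_filter] at hi
        refine ⟨⟨i, hi.2, hrank0 i hi.1⟩, ?_, rfl⟩
        rw [hSLf, Finset.mem_filter]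
        exact ⟨Finset.mem_univ _, hi.1⟩
    have hUcard : SUf.card = SpU.card := by
      refine Finset.card_bij (fun x _ => x.1) ?_ ?_ ?_
      · intro x hx
        rw [hSUf, Finset.mem_filter] at hx
        rw [hSpU, Finset.mem_filter]
        exact ⟨hx.2, by have := x.2.1; intro hc; linarith⟩
      · intro x hx y hy hxy
        exact Subtype.ext hxy
      · intro i hi
        rw [hSpU, Finset.mem_filter] at hi
        have hneg : β i < 0 := by
          rcases lt_trichotomy (β i) 0 with h | h | h
          · exact h
          · exact absurd h (hβ i)
          · exact absurd h hi.2
        refine ⟨⟨i, hneg, hrank0 i hi.1⟩, ?_, rfl⟩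
        rw [hSUf, Finset.mem_filter]
        exact ⟨Finset.mem_univ _, hi.1⟩
    have hLset : {x : {i // PL i} | p.2 ≤ τ x.1 + sl x.1 * (p.1 - t * p.2)}.ncard
        = SpL.card := by
      rw [show {x : {i // PL i} | p.2 ≤ τ x.1 + sl x.1 * (p.1 - t * p.2)}
          = (↑SLf : Set {i // PL i}) by
        ext x
        rw [Set.mem_setOf_eq, hLiff x]
        simp [hSLf]]
      rw [Set.ncard_coe_finset, hLcard]
    have hUset : {x : {i // PU i} | -(p.2) ≤ -(τ x.1) + -(sl x.1) * (p.1 - t * p.2)}.ncard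
        = SpU.card := by
      rw [show {x : {i // PU i} | -(p.2) ≤ -(τ x.1) + -(sl x.1) * (p.1 - t * p.2)}
          = (↑SUf : Set {i // PU i}) by
        ext x
        rw [Set.mem_setOf_eq, hUiff x]
        simp [hSUf]]
      rw [Set.ncard_coe_finset, hUcard]
    have hLkey := hχL (p.1 - t * p.2) p.2
    have hUkey := hχU (p.1 - t * p.2) (-(p.2))
    rw [hLset] at hLkey
    rw [hUset] at hUkey
    -- extraction helpers
    have hgetL : ∀ (x : {i // PL i}), p.2 ≤ τ x.1 + sl x.1 * (p.1 - t * p.2) →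
        x.1 ∈ Spf ∧ colorOf x.1 = χL x := by
      intro x hx
      have hm : x.1 ∈ Spf := (hLiff x).1 hx
      refine ⟨hm, ?_⟩
      rw [hcolL x.1 hm x.2]
    have hgetU : ∀ (x : {i // PU i}), -(p.2) ≤ -(τ x.1) + -(sl x.1) * (p.1 - t * p.2) →
        x.1 ∈ Spf ∧ colorOf x.1 = !(χU x) := by
      intro x hx
      have hm : x.1 ∈ Spf := (hUiff x).1 hx
      refine ⟨hm, ?_⟩
      rw [hcolU x.1 hm x.2]
    by_cases h3L : 3 ≤ SpL.card
    · obtain ⟨⟨xr, hxr, hxrc⟩, ⟨xb, hxb, hxbc⟩⟩ := hLkey.2 h3L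
      obtain ⟨hmr, hcr⟩ := hgetL xr hxr
      obtain ⟨hmb, hcb⟩ := hgetL xb hxb
      refine ⟨xr.1, xb.1, (hmemSpf _).1 hmr, (hmemSpf _).1 hmb, hfne ?_⟩
      rw [hcr, hcb, hxrc, hxbc]
      simp
    by_cases h3U : 3 ≤ SpU.card
    · obtain ⟨⟨xr, hxr, hxrc⟩, ⟨xb, hxb, hxbc⟩⟩ := hUkey.2 h3U
      obtain ⟨hmr, hcr⟩ := hgetU xr hxr
      obtain ⟨hmb, hcb⟩ := hgetU xb hxb
      refine ⟨xr.1, xb.1, (hmemSpf _).1 hmr, (hmemSpf _).1 hmb, hfne ?_⟩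
      rw [hcr, hcb, hxrc, hxbc]
      simp
    · have h2L : 2 ≤ SpL.card := by omega
      have h2U : 2 ≤ SpU.card := by omega
      obtain ⟨xr, hxr, hxrc⟩ := hLkey.1 h2L
      obtain ⟨yr, hyr, hyrc⟩ := hUkey.1 h2U
      obtain ⟨hmr, hcr⟩ := hgetL xr hxr
      obtain ⟨hmb, hcb⟩ := hgetU yr hyr
      refine ⟨xr.1, yr.1, (hmemSpf _).1 hmr, (hmemSpf _).1 hmb, hfne ?_⟩
      rw [hcr, hcb, hxrc, hyrc]
      simp
end
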